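/- arXiv:2309.13250 — 7 statements merged into one kernel-verified Lean document; each statement's English description precedes it below -/
import Mathlib

section
/- Let μ be a finite nonnegative measure on a partially ordered measurable space T (with {(x,y) : x ≤ y} measurable), and define the non-strict run coefficients L̄ₙ = μⁿ({a₁ ≤ ... ≤ aₙ}) for n ≥ 2, L̄₁ = μ(T), L̄₀ = 1. Then for all n ≥ 2, L̄ₙ ≤ L̄₂ · L̄ₙ₋₂. -/
open MeasureTheory

/-- non-strict run coefficients L̄ₙ = μⁿ({a₁ ≤ ... ≤ aₙ}) (which gives L̄₀ = 1 and
L̄₁ = μ(T)) satisfy L̄ₙ ≤ L̄₂ · L̄ₙ₋₂ for n ≥ 2. -/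
theorem stmt3 {T : Type*} [MeasurableSpace T] [PartialOrder T]
    (hord : MeasurableSet {p : T × T | p.1 ≤ p.2})
    (μ : Measure T) [IsFiniteMeasure μ]
    (L : ℕ → ENNReal)
    (hL : ∀ n, L n = (Measure.pi fun _ : Fin n => μ) {f : Fin n → T | Monotone f})
    (n : ℕ) (hn : 2 ≤ n) :
    L n ≤ L 2 * L (n - 2) := by
  obtain ⟨m, rfl⟩ : ∃ m, n = 2 + m := ⟨n - 2, by omega⟩
  have h2 : (2 + m) - 2 = m := by omega
  rw [hL, hL, hL, h2]
  have key : ∀ k, MeasurableSet {f : Fin k → T | Monotone f} := by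
    intro k
    have : {f : Fin k → T | Monotone f}
        = ⋂ (i : Fin k) (j : Fin k) (_ : i ≤ j), {f | f i ≤ f j} := by
      ext f
      simp only [Set.mem_iInter, Set.mem_setOf_eq]
      exact ⟨fun h i j hij => h hij, fun h i j hij => h i j hij⟩
    rw [this]
    exact MeasurableSet.iInter fun i => MeasurableSet.iInter fun j =>
      MeasurableSet.iInter fun _ =>
        show MeasurableSet ((fun f : Fin k → T => (f i, f j)) ⁻¹' {p : T × T | p.1 ≤ p.2}) from
        ((measurable_pi_apply i).prodMk (measurable_pi_apply j)) hord
  set G := (MeasurableEquiv.piCongrLeft (fun _ : Fin (2+m) => T) finSumFinEquiv).symm.trans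
      (MeasurableEquiv.sumPiEquivProdPi fun _ => T) with hG
  have hmp : MeasurePreserving G (Measure.pi fun _ : Fin (2+m) => μ)
      ((Measure.pi fun _ : Fin 2 => μ).prod (Measure.pi fun _ : Fin m => μ)) :=
    (measurePreserving_sumPiEquivProdPi fun _ => μ).comp
      ((measurePreserving_piCongrLeft (fun _ : Fin (2+m) => μ) finSumFinEquiv).symm _)
  have hsub : {f : Fin (2+m) → T | Monotone f} ⊆
      G ⁻¹' ({f : Fin 2 → T | Monotone f} ×ˢ {f : Fin m → T | Monotone f}) := by
    intro f hf
    have hG1 : ∀ i, (G f).1 i = f (Fin.castAdd m i) := by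
      intro i
      simp [hG, MeasurableEquiv.sumPiEquivProdPi, Equiv.sumPiEquivProdPi,
        MeasurableEquiv.piCongrLeft, Equiv.piCongrLeft, Equiv.piCongrLeft']
    have hG2 : ∀ i, (G f).2 i = f (Fin.natAdd 2 i) := by
      intro i
      simp [hG, MeasurableEquiv.sumPiEquivProdPi, Equiv.sumPiEquivProdPi,
        MeasurableEquiv.piCongrLeft, Equiv.piCongrLeft, Equiv.piCongrLeft']
    constructor
    · intro i j hij
      rw [hG1, hG1]
      exact hf (show (Fin.castAdd m i) ≤ (Fin.castAdd m j) by
        rw [Fin.le_def, Fin.coe_castAdd, Fin.coe_castAdd]; exact hij)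
    · intro i j hij
      rw [hG2, hG2]
      exact hf (show (Fin.natAdd 2 i) ≤ (Fin.natAdd 2 j) by
        rw [Fin.le_def, Fin.coe_natAdd, Fin.coe_natAdd]; exact Nat.add_le_add_left hij 2)
  calc (Measure.pi fun _ : Fin (2+m) => μ) {f | Monotone f}
      ≤ (Measure.pi fun _ : Fin (2+m) => μ)
        (G ⁻¹' ({f : Fin 2 → T | Monotone f} ×ˢ {f : Fin m → T | Monotone f})) :=
        measure_mono hsub
    _ = ((Measure.pi fun _ : Fin 2 => μ).prod (Measure.pi fun _ : Fin m => μ))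
        ({f : Fin 2 → T | Monotone f} ×ˢ {f : Fin m → T | Monotone f}) :=
        hmp.measure_preimage (((key 2).prod (key m)).nullMeasurableSet)
    _ = _ := by rw [Measure.prod_prod]
end

section
/- Let μ be a finite measure on a partial order T, let C = sup over atoms α of μ({α}) (C = 0 if no atoms). Then 2·μ²({(a,b) : a ≤ b}) ≤ ‖μ‖² + C·‖μ‖. -/
open MeasureTheory

/-- with C the supremum of the masses of atoms of μ,
2·μ²({(a,b) : a ≤ b}) ≤ ‖μ‖² + C·‖μ‖. -/
theorem stmt4 {T : Type*} [MeasurableSpace T] [PartialOrder T]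
    (hord : MeasurableSet {p : T × T | p.1 ≤ p.2})
    (μ : Measure T) [IsFiniteMeasure μ] :
    2 * (μ.prod μ) {p : T × T | p.1 ≤ p.2}
      ≤ μ Set.univ ^ 2 + (⨆ x : T, μ {x}) * μ Set.univ := by
  set S : Set (T × T) := {p : T × T | p.1 ≤ p.2} with hS
  set S' : Set (T × T) := Prod.swap ⁻¹' S with hS'
  have hS'meas : MeasurableSet S' := hord.preimage measurable_swap
  -- μ²(S') = μ²(S)
  have hswap : (μ.prod μ) S' = (μ.prod μ) S := by
    rw [hS', ← Measure.map_apply measurable_swap hord, Measure.prod_swap]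
  -- inclusion-exclusion
  have hsum' := measure_union_add_inter S hS'meas (μ := μ.prod μ)
  -- intersection is diagonal
  have hinter : S ∩ S' = {p : T × T | p.1 = p.2} := by
    ext ⟨a, b⟩
    simp only [hS, hS', Set.mem_inter_iff, Set.mem_preimage, Set.mem_setOf_eq, Prod.swap_prod_mk]
    exact ⟨fun ⟨h1, h2⟩ => le_antisymm h1 h2, fun h => ⟨h.le, h.ge⟩⟩
  have hdiagmeas : MeasurableSet (S ∩ S') := hord.inter hS'meas
  have hdiag : (μ.prod μ) (S ∩ S') ≤ (⨆ x : T, μ {x}) * μ Set.univ := by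
    rw [Measure.prod_apply hdiagmeas]
    have : ∀ x : T, Prod.mk x ⁻¹' (S ∩ S') = {x} := by
      intro x
      rw [hinter]
      ext y
      simp only [Set.mem_preimage, Set.mem_setOf_eq, Set.mem_singleton_iff]
      exact eq_comm
    calc ∫⁻ x, μ (Prod.mk x ⁻¹' (S ∩ S')) ∂μ
        = ∫⁻ x, μ {x} ∂μ := by simp_rw [this]
      _ ≤ ∫⁻ _, (⨆ x : T, μ {x}) ∂μ := lintegral_mono fun x => le_iSup (fun x => μ {x}) x
      _ = (⨆ x : T, μ {x}) * μ Set.univ := lintegral_const _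
  have hunion : (μ.prod μ) (S ∪ S') ≤ μ Set.univ ^ 2 := by
    calc (μ.prod μ) (S ∪ S') ≤ (μ.prod μ) Set.univ := measure_mono (Set.subset_univ _)
      _ = μ Set.univ * μ Set.univ := by
          rw [← Set.univ_prod_univ, Measure.prod_prod]
      _ = μ Set.univ ^ 2 := (sq _).symm
  calc 2 * (μ.prod μ) S = (μ.prod μ) S + (μ.prod μ) S' := by rw [hswap, two_mul]
    _ = (μ.prod μ) (S ∪ S') + (μ.prod μ) (S ∩ S') := hsum'.symm
    _ ≤ μ Set.univ ^ 2 + (⨆ x : T, μ {x}) * μ Set.univ := add_le_add hunion hdiag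
end

section
/- Let {Xᵢ} be i.i.d. with law μ on a partial order, let L°ₙ = P(X₁ < ... < Xₙ), and fix i ≥ 1, n ≥ 1. Then P(X_{i−1} ≮ Xᵢ < X_{i+1} < ... < X_{i+n−1} ≮ X_{i+n}) = L°ₙ − 2L°ₙ₊₁ + L°ₙ₊₂. -/
open MeasureTheory ProbabilityTheory

/-- Consecutive increase implies pairwise increase. -/
lemma consec_pairwise {α : Type*} [Preorder α] (f : ℕ → α) (m : ℕ)
    (h : ∀ t, t + 1 < m → f t < f (t + 1)) :
    ∀ j, j < m → ∀ i, i < j → f i < f j := by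
  intro j
  induction j with
  | zero => intro _ i hi; exact absurd hi (Nat.not_lt_zero i)
  | succ j ih =>
    intro hj i hi
    have hstep : f j < f (j + 1) := h j hj
    rcases Nat.lt_or_ge i j with h' | h'
    · exact (ih (by omega) i h').trans hstep
    · have hij : i = j := by omega
      subst hij; exact hstep

/-- Pairwise increase on a window iff consecutive increase. -/
lemma window_iff {α : Type*} [Preorder α] (f : ℕ → α) (s m : ℕ) :
    (∀ j k, s ≤ j → j < k → k < s + m → f j < f k) ↔
    (∀ t, t + 1 < m → f (s + t) < f (s + t + 1)) := by
  constructor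
  · intro h t ht
    exact h (s + t) (s + t + 1) (by omega) (by omega) (by omega)
  · intro h j k hsj hjk hkm
    have key := consec_pairwise (fun t => f (s + t)) m h (k - s) (by omega) (j - s) (by omega)
    have e1 : s + (j - s) = j := by omega
    have e2 : s + (k - s) = k := by omega
    simp only [e1, e2] at key
    exact key

lemma split_left {α : Type*} [Preorder α] (f : ℕ → α) (s m : ℕ) (hm : 1 ≤ m) :
    (f s < f (s + 1) ∧ ∀ t, t + 1 < m → f (s + 1 + t) < f (s + 1 + t + 1)) ↔
    (∀ t, t + 1 < m + 1 → f (s + t) < f (s + t + 1)) := by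
  constructor
  · rintro ⟨h0, h⟩ t ht
    cases t with
    | zero => simpa using h0
    | succ t =>
      have key := h t (by omega)
      have e1 : s + 1 + t = s + (t + 1) := by omega
      rw [e1] at key
      exact key
  · intro h
    have h0 := h 0 (by omega : 0 + 1 < m + 1)
    refine ⟨by simpa using h0, fun t ht => ?_⟩
    have key := h (t + 1) (by omega)
    have e1 : s + 1 + t = s + (t + 1) := by omega
    rw [e1]
    exact key

lemma split_right {α : Type*} [Preorder α] (f : ℕ → α) (s m : ℕ) (hm : 1 ≤ m) :
    ((∀ t, t + 1 < m → f (s + t) < f (s + t + 1)) ∧ f (s + m - 1) < f (s + m)) ↔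
    (∀ t, t + 1 < m + 1 → f (s + t) < f (s + t + 1)) := by
  constructor
  · rintro ⟨h, hl⟩ t ht
    rcases Nat.lt_or_ge (t + 1) m with h' | h'
    · exact h t h'
    · have htm : t = m - 1 := by omega
      subst htm
      have e1 : s + (m - 1) = s + m - 1 := by omega
      have e2 : s + m - 1 + 1 = s + m := by omega
      rw [e1, e2]
      exact hl
  · intro h
    refine ⟨fun t ht => h t (by omega), ?_⟩
    have key := h (m - 1) (by omega)
    have e1 : s + (m - 1) = s + m - 1 := by omega
    have e2 : s + m - 1 + 1 = s + m := by omega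
    rw [e1, e2] at key
    exact key

/-- The joint law of any finite window of an i.i.d. sequence is the product measure. -/
lemma jointLaw {T Ω : Type*} [MeasurableSpace T] [MeasurableSpace Ω]
    (P : Measure Ω) [IsProbabilityMeasure P] (μ : Measure T) [IsProbabilityMeasure μ]
    (X : ℕ → Ω → T) (hmeas : ∀ i, Measurable (X i))
    (hindep : iIndepFun X P)
    (hdist : ∀ i, P.map (X i) = μ) (m s : ℕ) :
    P.map (fun ω (k : Fin m) => X (s + k) ω) = Measure.pi (fun _ : Fin m => μ) := by
  classical
  have hf : Measurable (fun ω (k : Fin m) => X (s + k) ω) :=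
    measurable_pi_lambda _ fun k => hmeas _
  refine (Measure.pi_eq fun sets hsets => ?_).symm
  set sets' : ℕ → Set T := fun k => if h : k < m then sets ⟨k, h⟩ else Set.univ with hsets'
  have hsets'm : ∀ k, MeasurableSet (sets' k) := by
    intro k
    by_cases h : k < m
    · simpa [hsets', h] using hsets ⟨k, h⟩
    · simp [hsets', h]
  have hpre : (fun ω (k : Fin m) => X (s + k) ω) ⁻¹' Set.pi Set.univ sets
      = ⋂ j ∈ Finset.image (fun k => s + k) (Finset.range m), X j ⁻¹' sets' (j - s) := by
    ext ω
    simp only [Set.mem_preimage, Set.mem_pi, Set.mem_univ, forall_true_left, Set.mem_iInter,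
      Finset.mem_image, Finset.mem_range, forall_exists_index, and_imp]
    constructor
    · rintro h j k hk rfl
      have e : s + k - s = k := by omega
      rw [e]
      have : sets' k = sets ⟨k, hk⟩ := by simp only [hsets']; rw [dif_pos hk]
      rw [this]
      exact h ⟨k, hk⟩
    · intro h k
      have key := h (s + (k : ℕ)) (k : ℕ) k.isLt rfl
      have e : s + (k : ℕ) - s = (k : ℕ) := by omega
      rw [e] at key
      have : sets' (k : ℕ) = sets k := by
        simp only [hsets']
        rw [dif_pos k.isLt]
      rwa [this] at key
  rw [Measure.map_apply hf (MeasurableSet.univ_pi hsets), hpre,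
    hindep.measure_inter_preimage_eq_mul _ (fun j _ => hsets'm (j - s)),
    Finset.prod_image (fun a _ b _ h => by omega)]
  have hfac : ∀ k ∈ Finset.range m, P (X (s + k) ⁻¹' sets' (s + k - s)) = μ (sets' k) := by
    intro k hk
    have e : s + k - s = k := by omega
    rw [e, ← hdist (s + k), Measure.map_apply (hmeas (s + k)) (hsets'm k)]
  rw [Finset.prod_congr rfl hfac, ← Fin.prod_univ_eq_prod_range (fun k => μ (sets' k)) m]
  refine Finset.prod_congr rfl fun k _ => ?_
  congr 1
  simp only [hsets']
  rw [dif_pos k.isLt]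

/-- for i ≥ 1, n ≥ 1,
P(X_{i−1} ≮ Xᵢ < X_{i+1} < ... < X_{i+n−1} ≮ X_{i+n}) = Lₙ − 2Lₙ₊₁ + Lₙ₊₂,
stated additively as P(...) + 2·Lₙ₊₁ = Lₙ + Lₙ₊₂. -/
theorem stmt7 {T Ω : Type*} [MeasurableSpace T] [PartialOrder T] [MeasurableSpace Ω]
    (hord : MeasurableSet {p : T × T | p.1 < p.2})
    (P : Measure Ω) [IsProbabilityMeasure P] (μ : Measure T)
    (X : ℕ → Ω → T) (hmeas : ∀ i, Measurable (X i))
    (hindep : iIndepFun X P)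
    (hdist : ∀ i, P.map (X i) = μ)
    (L : ℕ → ENNReal)
    (hL : ∀ n, L n = P {ω | ∀ i j : ℕ, i < j → j < n → X i ω < X j ω})
    (i n : ℕ) (hi : 1 ≤ i) (hn : 1 ≤ n) :
    P {ω | ¬ X (i - 1) ω < X i ω ∧
          (∀ j k : ℕ, i ≤ j → j < k → k < i + n → X j ω < X k ω) ∧
          ¬ X (i + n - 1) ω < X (i + n) ω}
        + 2 * L (n + 1)
      = L n + L (n + 2) := by
  classical
  obtain ⟨i', rfl⟩ : ∃ i', i = i' + 1 := ⟨i - 1, by omega⟩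
  obtain ⟨n', rfl⟩ : ∃ n', n = n' + 1 := ⟨n - 1, by omega⟩
  clear hi hn
  have hμ : IsProbabilityMeasure μ := by
    rw [← hdist 0]; exact Measure.isProbabilityMeasure_map (hmeas 0).aemeasurable
  have hpair : ∀ a b : ℕ, MeasurableSet {ω | X a ω < X b ω} :=
    fun a b => ((hmeas a).prodMk (hmeas b)) hord
  -- the chain events
  set D : ℕ → ℕ → Set Ω :=
    fun s m => {ω | ∀ t, t + 1 < m → X (s + t) ω < X (s + t + 1) ω} with hD
  -- key : P (D s m) = L m for all s, m
  have key : ∀ s m : ℕ, P (D s m) = L m := by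
    intro s m
    set B : Set (Fin m → T) := ⋂ (t : ℕ), ⋂ (ht : t + 1 < m),
      (fun v : Fin m → T => (v ⟨t, Nat.lt_of_succ_lt ht⟩, v ⟨t + 1, ht⟩)) ⁻¹'
        {p : T × T | p.1 < p.2} with hBdef
    have hB : MeasurableSet B :=
      MeasurableSet.iInter fun t => MeasurableSet.iInter fun ht =>
        ((measurable_pi_apply _).prodMk (measurable_pi_apply _)) hord
    have hDpre : ∀ u : ℕ, D u m = (fun ω (k : Fin m) => X (u + k) ω) ⁻¹' B := by
      intro u; ext ω
      simp only [hD, Set.mem_setOf_eq, Set.mem_preimage, hBdef, Set.mem_iInter]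
      constructor
      · intro h t ht; exact h t ht
      · intro h t ht; exact h t ht
    have hmap : ∀ u : ℕ, P (D u m) = Measure.pi (fun _ : Fin m => μ) B := by
      intro u
      rw [hDpre u, ← Measure.map_apply (measurable_pi_lambda _ fun k => hmeas _) hB,
        jointLaw P μ X hmeas hindep hdist m u]
    have hL0 : L m = P (D 0 m) := by
      rw [hL m]
      congr 1
      ext ω
      simp only [hD, Set.mem_setOf_eq]
      constructor
      · intro h t ht
        simp only [Nat.zero_add]
        exact h t (t + 1) (by omega) (by omega)
      · intro h a b hab hbm
        have h' : ∀ t, t + 1 < m → X t ω < X (t + 1) ω := by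
          intro t ht
          have := h t ht
          simpa [Nat.zero_add] using this
        exact consec_pairwise (fun t => X t ω) m h' b hbm a hab
    rw [hmap s, ← hmap 0, ← hL0]
  -- the three basic events
  set a : Set Ω := {ω | X i' ω < X (i' + 1) ω} with ha
  set b : Set Ω := {ω | X (i' + 1 + n') ω < X (i' + 1 + n' + 1) ω} with hb
  set R : Set Ω := D (i' + 1) (n' + 1) with hR
  -- set identifications
  have hRb : R ∩ b = D (i' + 1) (n' + 2) := by
    ext ω
    simp only [hR, hb, hD, Set.mem_inter_iff, Set.mem_setOf_eq]
    have := split_right (fun t => X t ω) (i' + 1) (n' + 1) (by omega)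
    simp only [show i' + 1 + (n' + 1) - 1 = i' + 1 + n' by omega,
      show i' + 1 + (n' + 1) = i' + 1 + n' + 1 by omega,
      show (n' + 1) + 1 = n' + 2 by omega] at this
    exact this
  have haR : a ∩ R = D i' (n' + 2) := by
    ext ω
    simp only [ha, hR, hD, Set.mem_inter_iff, Set.mem_setOf_eq]
    have := split_left (fun t => X t ω) i' (n' + 1) (by omega)
    simp only [show (n' + 1) + 1 = n' + 2 by omega] at this
    exact this
  have haRb : a ∩ (R ∩ b) = D i' (n' + 3) := by
    rw [hRb]
    ext ω
    simp only [ha, hD, Set.mem_inter_iff, Set.mem_setOf_eq]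
    have := split_left (fun t => X t ω) i' (n' + 2) (by omega)
    simp only [show (n' + 2) + 1 = n' + 3 by omega] at this
    exact this
  -- identify the main event
  have hE : {ω | ¬ X (i' + 1 - 1) ω < X (i' + 1) ω ∧
          (∀ j k : ℕ, i' + 1 ≤ j → j < k → k < i' + 1 + (n' + 1) → X j ω < X k ω) ∧
          ¬ X (i' + 1 + (n' + 1) - 1) ω < X (i' + 1 + (n' + 1)) ω}
      = aᶜ ∩ (R ∩ bᶜ) := by
    ext ω
    simp only [Set.mem_setOf_eq, Set.mem_inter_iff, Set.mem_compl_iff, ha, hb, hR, hD]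
    constructor
    · rintro ⟨h1, h2, h3⟩
      refine ⟨?_, (window_iff (fun t => X t ω) (i' + 1) (n' + 1)).mp h2, ?_⟩
      · simpa [show i' + 1 - 1 = i' by omega] using h1
      · simpa [show i' + 1 + (n' + 1) - 1 = i' + 1 + n' by omega,
          show i' + 1 + (n' + 1) = i' + 1 + n' + 1 by omega] using h3
    · rintro ⟨h1, h2, h3⟩
      refine ⟨?_, (window_iff (fun t => X t ω) (i' + 1) (n' + 1)).mpr h2, ?_⟩
      · simpa [show i' + 1 - 1 = i' by omega] using h1
      · simpa [show i' + 1 + (n' + 1) - 1 = i' + 1 + n' by omega,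
          show i' + 1 + (n' + 1) = i' + 1 + n' + 1 by omega] using h3
  -- decompositions
  have d1 : P (R ∩ b) + P (R ∩ bᶜ) = P R := by
    rw [← Set.diff_eq]; exact measure_inter_add_diff R (hpair _ _)
  have d2 : P ((R ∩ bᶜ) ∩ a) + P ((R ∩ bᶜ) ∩ aᶜ) = P (R ∩ bᶜ) := by
    rw [← Set.diff_eq]; exact measure_inter_add_diff _ (hpair _ _)
  have d3 : P ((a ∩ R) ∩ b) + P ((a ∩ R) ∩ bᶜ) = P (a ∩ R) := by
    rw [← Set.diff_eq]; exact measure_inter_add_diff _ (hpair _ _)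
  -- L values
  have eR : P R = L (n' + 1) := key (i' + 1) (n' + 1)
  have eRb : P (R ∩ b) = L (n' + 2) := by rw [hRb]; exact key (i' + 1) (n' + 2)
  have eaR : P (a ∩ R) = L (n' + 2) := by rw [haR]; exact key i' (n' + 2)
  have eaRb : P ((a ∩ R) ∩ b) = L (n' + 3) := by
    rw [Set.inter_assoc, haRb]; exact key i' (n' + 3)
  -- final computation
  have goalL : L (n' + 1 + 1) = L (n' + 2) := by norm_num
  have goalL2 : L (n' + 1 + 2) = L (n' + 3) := by norm_num
  rw [hE, goalL, goalL2]
  have h2 : (2 : ENNReal) * L (n' + 2)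
      = P (R ∩ b) + (P ((a ∩ R) ∩ b) + P ((a ∩ R) ∩ bᶜ)) := by
    rw [two_mul, d3]
    exact congrArg₂ (· + ·) eRb.symm eaR.symm
  rw [h2, ← eR, ← d1, eaRb]
  have c1 : aᶜ ∩ (R ∩ bᶜ) = (R ∩ bᶜ) ∩ aᶜ := Set.inter_comm _ _
  have c2 : a ∩ R ∩ bᶜ = (R ∩ bᶜ) ∩ a := by
    ext ω; simp only [Set.mem_inter_iff]; tauto
  rw [c1, c2, ← d2]
  ring
end

section
/- Let {Xᵢ} be i.i.d. with law μ on a partial order, i ≥ 1, and L₂ = P(X₁ ≤ X₂) < 1. Then the conditional expectation of the run length Nᵢ given that a run starts at i (i.e., given X_{i−1} ≰ Xᵢ) equals 1/(1 − L₂). -/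
open MeasureTheory ProbabilityTheory

/-- sup over an antitone predicate equals the tsum of indicators. -/
lemma stmt10_sup_eq_tsum (p : ℕ → Prop) (h0 : p 0)
    (hanti : ∀ m n : ℕ, m ≤ n → p n → p m) :
    (⨆ (n : ℕ) (_ : p n), (n : ENNReal))
      = ∑' n : ℕ, Set.indicator {k : ℕ | p (k + 1)} (fun _ => (1 : ENNReal)) n := by
  classical
  have hiff : ∀ n : ℕ, Set.indicator {k : ℕ | p (k + 1)} (fun _ => (1 : ENNReal)) n
      = if p (n + 1) then (1 : ENNReal) else 0 := by
    intro n
    rw [Set.indicator_apply]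
    simp only [Set.mem_setOf_eq]
  rw [tsum_congr hiff]
  by_cases hall : ∀ n, p n
  · have h1 : (⨆ (n : ℕ) (_ : p n), (n : ENNReal)) = ⨆ n : ℕ, (n : ENNReal) := by
      simp [hall]
    have h2 : ∀ n : ℕ, (if p (n + 1) then (1 : ENNReal) else 0) = 1 := fun n => if_pos (hall _)
    rw [h1, tsum_congr h2, ENNReal.tsum_eq_iSup_nat]
    simp
  · obtain ⟨n₀, hn₀⟩ := not_forall.1 hall
    have hex : ∃ n, ¬ p n := ⟨n₀, hn₀⟩
    set m := Nat.find hex with hm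
    have key : ∀ n, p n ↔ n < m := by
      intro n
      constructor
      · intro hp
        by_contra h
        push_neg at h
        exact (Nat.find_spec hex) (hanti m n h hp)
      · intro h
        by_contra hnp
        exact (Nat.find_min hex h) hnp
    have hm1 : 1 ≤ m := (key 0).1 h0
    have hLHS : (⨆ (n : ℕ) (_ : p n), (n : ENNReal)) = ((m - 1 : ℕ) : ENNReal) := by
      apply le_antisymm
      · refine iSup₂_le fun n hn => ?_
        have hnm := (key n).1 hn
        exact Nat.cast_le.2 (by omega)
      · have hp : p (m - 1) := (key _).2 (by omega)
        exact le_iSup₂ (f := fun (n : ℕ) (_ : p n) => (n : ENNReal)) (m - 1) hp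
    have hRHS : (∑' n : ℕ, if p (n + 1) then (1 : ENNReal) else 0) = ((m - 1 : ℕ) : ENNReal) := by
      rw [tsum_eq_sum (s := Finset.range (m - 1))
        (fun n hn => by
          have hnm : ¬ (n + 1 < m) := by
            simp only [Finset.mem_range] at hn; omega
          exact if_neg (fun hp => hnm ((key _).1 hp)))]
      rw [Finset.sum_congr rfl (fun n hn => if_pos ((key _).2 (by
        simp only [Finset.mem_range] at hn; omega)))]
      simp
    rw [hLHS, hRHS]

/-- the set of monotone vectors. -/
def stmt10_chainSet (T : Type*) [PartialOrder T] (n : ℕ) : Set (Fin n → T) :=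
  {v | ∀ a b : Fin n, a < b → v a ≤ v b}

lemma stmt10_chainSet_meas {T : Type*} [MeasurableSpace T] [PartialOrder T]
    (hord : MeasurableSet {p : T × T | p.1 ≤ p.2}) (n : ℕ) :
    MeasurableSet (stmt10_chainSet T n) := by
  have h : stmt10_chainSet T n
      = ⋂ (a : Fin n) (b : Fin n), {v : Fin n → T | a < b → v a ≤ v b} := by
    ext v; simp [stmt10_chainSet, Set.mem_iInter]
  rw [h]
  refine MeasurableSet.iInter fun a => MeasurableSet.iInter fun b => ?_
  by_cases hab : a < b
  · have : {v : Fin n → T | a < b → v a ≤ v b}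
        = (fun v : Fin n → T => (v a, v b)) ⁻¹' {p : T × T | p.1 ≤ p.2} := by
      ext v; simp [hab]
    rw [this]
    exact ((measurable_pi_apply a).prodMk (measurable_pi_apply b)) hord
  · have : {v : Fin n → T | a < b → v a ≤ v b} = Set.univ := by
      ext v; simp [hab]
    simp [this]

lemma stmt10_chainPre {T Ω : Type*} [PartialOrder T] (X : ℕ → Ω → T) (j n : ℕ) :
    {ω | ∀ a b : ℕ, j ≤ a → a < b → b < j + n → X a ω ≤ X b ω}
      = (fun ω (l : Fin n) => X (j + (l : ℕ)) ω) ⁻¹' stmt10_chainSet T n := by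
  ext ω
  simp only [Set.mem_setOf_eq, Set.mem_preimage, stmt10_chainSet]
  constructor
  · intro h a b hab
    have hab' : (a : ℕ) < b := hab
    exact h (j + a) (j + b) (by omega) (by omega) (by have := b.isLt; omega)
  · intro h a b hja hab hbn
    have ha' : a - j < n := by omega
    have hb' : b - j < n := by omega
    have := h ⟨a - j, ha'⟩ ⟨b - j, hb'⟩ (by simp only [Fin.lt_def]; omega)
    simpa [show j + (a - j) = a by omega, show j + (b - j) = b by omega] using this

lemma stmt10_vecLaw {T Ω : Type*} [MeasurableSpace T] [MeasurableSpace Ω]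
    (P : Measure Ω) [IsProbabilityMeasure P] (μ : Measure T)
    (X : ℕ → Ω → T) (hmeas : ∀ i, Measurable (X i))
    (hindep : iIndepFun X P)
    (hdist : ∀ i, P.map (X i) = μ)
    (n : ℕ) (f : Fin n → ℕ) (hf : Function.Injective f) :
    P.map (fun ω (j : Fin n) => X (f j) ω) = Measure.pi (fun _ => μ) := by
  classical
  have hμ : IsProbabilityMeasure μ := by
    rw [← hdist 0]; exact Measure.isProbabilityMeasure_map (hmeas 0).aemeasurable
  have hvec : Measurable (fun ω (j : Fin n) => X (f j) ω) :=
    measurable_pi_lambda _ fun j => hmeas (f j)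
  refine (Measure.pi_eq fun s hs => ?_).symm
  rw [Measure.map_apply hvec (MeasurableSet.univ_pi hs)]
  set sets : ℕ → Set T := fun a => ⋂ j : Fin n, if f j = a then s j else Set.univ with hsets
  have hsets_meas : ∀ a, MeasurableSet (sets a) := by
    intro a
    refine MeasurableSet.iInter fun j => ?_
    by_cases h : f j = a <;> simp [h, hs j]
  have hsets_f : ∀ j : Fin n, sets (f j) = s j := by
    intro j
    apply Set.Subset.antisymm
    · intro x hx
      have := Set.mem_iInter.1 hx j
      simpa using this
    · intro x hx
      refine Set.mem_iInter.2 fun j' => ?_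
      by_cases h : f j' = f j
      · have hj : j' = j := hf h
        subst hj
        simpa using hx
      · simp [h]
  have hpre : (fun ω (j : Fin n) => X (f j) ω) ⁻¹' Set.univ.pi s
      = ⋂ a ∈ Finset.univ.image f, X a ⁻¹' sets a := by
    ext ω
    simp only [Set.mem_preimage, Set.mem_univ_pi, Set.mem_iInter, Finset.mem_image,
      Finset.mem_univ, true_and, Set.mem_preimage]
    constructor
    · rintro h a ⟨j, rfl⟩
      rw [hsets_f j]
      exact h j
    · intro h j
      have := h (f j) ⟨j, rfl⟩
      rwa [hsets_f j] at this
  rw [hpre, hindep.measure_inter_preimage_eq_mul _ (fun a _ => hsets_meas a),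
    Finset.prod_image (fun j _ j' _ h => hf h)]
  refine Finset.prod_congr rfl fun j _ => ?_
  rw [hsets_f j, ← hdist (f j), Measure.map_apply (hmeas (f j)) (hs j)]

lemma stmt10_chainProb {T Ω : Type*} [MeasurableSpace T] [PartialOrder T] [MeasurableSpace Ω]
    (hord : MeasurableSet {p : T × T | p.1 ≤ p.2})
    (P : Measure Ω) [IsProbabilityMeasure P] (μ : Measure T)
    (X : ℕ → Ω → T) (hmeas : ∀ i, Measurable (X i))
    (hindep : iIndepFun X P)
    (hdist : ∀ i, P.map (X i) = μ)
    (j n : ℕ) :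
    P {ω | ∀ a b : ℕ, j ≤ a → a < b → b < j + n → X a ω ≤ X b ω}
      = Measure.pi (fun _ : Fin n => μ) (stmt10_chainSet T n) := by
  have hf : Function.Injective (fun l : Fin n => j + (l : ℕ)) := by
    intro a b h
    have h' : j + (a : ℕ) = j + (b : ℕ) := h
    exact Fin.ext (by omega)
  have hvec : Measurable (fun ω (l : Fin n) => X (j + (l : ℕ)) ω) :=
    measurable_pi_lambda _ fun l => hmeas _
  rw [stmt10_chainPre X j n, ← Measure.map_apply hvec (stmt10_chainSet_meas hord n),
    stmt10_vecLaw P μ X hmeas hindep hdist n _ hf]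

lemma stmt10_pairProb {T Ω : Type*} [MeasurableSpace T] [PartialOrder T] [MeasurableSpace Ω]
    (hord : MeasurableSet {p : T × T | p.1 ≤ p.2})
    (P : Measure Ω) [IsProbabilityMeasure P] (μ : Measure T)
    (X : ℕ → Ω → T) (hmeas : ∀ i, Measurable (X i))
    (hindep : iIndepFun X P)
    (hdist : ∀ i, P.map (X i) = μ)
    (a b : ℕ) (hab : a ≠ b) :
    P {ω | X a ω ≤ X b ω}
      = Measure.pi (fun _ : Fin 2 => μ) {v : Fin 2 → T | v 0 ≤ v 1} := by
  classical
  set f : Fin 2 → ℕ := fun l => if l = 0 then a else b with hfdef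
  have hf : Function.Injective f := by
    intro x y h
    by_cases hx : x = 0 <;> by_cases hy : y = 0
    · rw [hx, hy]
    · exfalso
      rw [hfdef] at h
      simp only [hx, hy, if_pos, if_neg, if_true, if_false] at h
      exact hab h
    · exfalso
      rw [hfdef] at h
      simp only [hx, hy, if_pos, if_neg, if_true, if_false] at h
      exact hab h.symm
    · have hx1 : (x : ℕ) ≠ 0 := fun h0 => hx (Fin.ext (by simp [h0]))
      have hy1 : (y : ℕ) ≠ 0 := fun h0 => hy (Fin.ext (by simp [h0]))
      have hx2 := x.isLt
      have hy2 := y.isLt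
      exact Fin.ext (by omega)
  have hvec : Measurable (fun ω (l : Fin 2) => X (f l) ω) :=
    measurable_pi_lambda _ fun l => hmeas _
  have hS : MeasurableSet {v : Fin 2 → T | v 0 ≤ v 1} := by
    have hSe : {v : Fin 2 → T | v 0 ≤ v 1}
        = (fun v : Fin 2 → T => (v 0, v 1)) ⁻¹' {p : T × T | p.1 ≤ p.2} := rfl
    rw [hSe]
    exact ((measurable_pi_apply (0 : Fin 2)).prodMk (measurable_pi_apply 1)) hord
  have hpre : {ω | X a ω ≤ X b ω}
      = (fun ω (l : Fin 2) => X (f l) ω) ⁻¹' {v : Fin 2 → T | v 0 ≤ v 1} := by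
    ext ω
    simp [hfdef]
  rw [hpre, ← Measure.map_apply hvec hS, stmt10_vecLaw P μ X hmeas hindep hdist 2 f hf]

/-- for i ≥ 1 and L₂ = P(X₀ ≤ X₁) < 1, the conditional expectation of the
non-strict run length Nᵢ, given that a run starts at i (i.e. X_{i−1} ≰ Xᵢ), is 1/(1 − L₂). -/
theorem stmt10 {T Ω : Type*} [MeasurableSpace T] [PartialOrder T] [MeasurableSpace Ω]
    (hord : MeasurableSet {p : T × T | p.1 ≤ p.2})
    (P : Measure Ω) [IsProbabilityMeasure P] (μ : Measure T)
    (X : ℕ → Ω → T) (hmeas : ∀ i, Measurable (X i))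
    (hindep : iIndepFun X P)
    (hdist : ∀ i, P.map (X i) = μ)
    (i : ℕ) (hi : 1 ≤ i)
    (hL2 : P {ω | X 0 ω ≤ X 1 ω} < 1) :
    (∫⁻ ω in {ω | ¬ X (i - 1) ω ≤ X i ω},
        (⨆ (n : ℕ) (_ : ∀ j k : ℕ, i ≤ j → j < k → k < i + n → X j ω ≤ X k ω),
          (n : ENNReal)) ∂P)
      / P {ω | ¬ X (i - 1) ω ≤ X i ω}
    = (1 - P {ω | X 0 ω ≤ X 1 ω})⁻¹ := by
  classical
  have hμ : IsProbabilityMeasure μ := by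
    rw [← hdist 0]; exact Measure.isProbabilityMeasure_map (hmeas 0).aemeasurable
  set q := P {ω | X 0 ω ≤ X 1 ω} with hqdef
  have hpair : ∀ a b : ℕ, a ≠ b → P {ω | X a ω ≤ X b ω} = q := by
    intro a b hab
    rw [stmt10_pairProb hord P μ X hmeas hindep hdist a b hab, hqdef,
      stmt10_pairProb hord P μ X hmeas hindep hdist 0 1 (by omega)]
  set L : ℕ → ENNReal := fun n => Measure.pi (fun _ : Fin n => μ) (stmt10_chainSet T n)
    with hLdef
  have hchain : ∀ j n : ℕ,
      P {ω | ∀ a b : ℕ, j ≤ a → a < b → b < j + n → X a ω ≤ X b ω} = L n :=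
    fun j n => stmt10_chainProb hord P μ X hmeas hindep hdist j n
  have hLle : ∀ n, L n ≤ 1 := by
    intro n
    rw [← hchain 0 n]
    exact prob_le_one
  have hLne : ∀ n, L n ≠ ⊤ := fun n => (lt_of_le_of_lt (hLle n) (by norm_num)).ne
  have hLanti : ∀ m n : ℕ, m ≤ n → L n ≤ L m := by
    intro m n hmn
    rw [← hchain 0 m, ← hchain 0 n]
    refine measure_mono fun ω h a b h1 h2 h3 => h a b h1 h2 (by omega)
  have hL1 : L 1 = 1 := by
    rw [← hchain 0 1]
    have : {ω | ∀ a b : ℕ, 0 ≤ a → a < b → b < 0 + 1 → X a ω ≤ X b ω} = Set.univ := by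
      ext ω
      simp only [Set.mem_setOf_eq, Set.mem_univ, iff_true]
      intro a b h1 h2 h3
      omega
    rw [this]
    exact measure_univ
  have hstep : ∀ n : ℕ, L (n + 2) ≤ L n * q := by
    intro n
    rw [← hchain 0 (n + 2), ← hchain 0 n, ← hpair n (n + 1) (by omega)]
    have hsub : {ω | ∀ a b : ℕ, 0 ≤ a → a < b → b < 0 + (n + 2) → X a ω ≤ X b ω}
        ⊆ {ω | ∀ a b : ℕ, 0 ≤ a → a < b → b < 0 + n → X a ω ≤ X b ω}
          ∩ {ω | X n ω ≤ X (n + 1) ω} := by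
      intro ω h
      exact ⟨fun a b h1 h2 h3 => h a b h1 h2 (by omega),
        h n (n + 1) (by omega) (by omega) (by omega)⟩
    refine le_trans (measure_mono hsub) (le_of_eq ?_)
    have hdisj : Disjoint (Finset.range n) ({n, n + 1} : Finset ℕ) := by
      simp only [Finset.disjoint_left, Finset.mem_range, Finset.mem_insert,
        Finset.mem_singleton]
      omega
    have hφ : Measurable (fun v : (↥(Finset.range n) → T) =>
        (fun l : Fin n => v ⟨(l : ℕ), by simpa using l.isLt⟩)) :=
      measurable_pi_lambda _ fun l => measurable_pi_apply _
    have hψ : Measurable (fun v : (↥({n, n + 1} : Finset ℕ) → T) =>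
        ((v ⟨n, by simp⟩, v ⟨n + 1, by simp⟩) : T × T)) :=
      (measurable_pi_apply _).prodMk (measurable_pi_apply _)
    have hIF := (hindep.indepFun_finset (Finset.range n) {n, n + 1} hdisj hmeas).comp hφ hψ
    have hIF' : IndepFun (fun ω (l : Fin n) => X (l : ℕ) ω)
        (fun ω => (X n ω, X (n + 1) ω)) P := hIF
    have e1 : {ω | ∀ a b : ℕ, 0 ≤ a → a < b → b < 0 + n → X a ω ≤ X b ω}
        = (fun ω (l : Fin n) => X (l : ℕ) ω) ⁻¹' stmt10_chainSet T n := by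
      rw [stmt10_chainPre X 0 n]
      simp only [Nat.zero_add]
    have e2 : {ω | X n ω ≤ X (n + 1) ω}
        = (fun ω => (X n ω, X (n + 1) ω)) ⁻¹' {p : T × T | p.1 ≤ p.2} := rfl
    rw [e1, e2, hIF'.measure_inter_preimage_eq_mul _ _ (stmt10_chainSet_meas hord n) hord,
      ← e1, ← e2]
  have hq1 : q < 1 := hL2
  have hdecay : ∀ m : ℕ, L (2 * m) ≤ q ^ m := by
    intro m
    induction m with
    | zero => simpa using hLle 0
    | succ m ih =>
      have h2 : 2 * (m + 1) = 2 * m + 2 := by omega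
      rw [h2, pow_succ]
      exact le_trans (hstep (2 * m)) (mul_le_mul' ih le_rfl)
  have hinf0 : (⨅ N : ℕ, L (N + 1)) = 0 := by
    refine le_antisymm ?_ zero_le
    have hb : ∀ m : ℕ, (⨅ N : ℕ, L (N + 1)) ≤ q ^ m := by
      intro m
      refine le_trans (iInf_le _ (2 * m)) (le_trans (hLanti (2 * m) (2 * m + 1) (by omega)) ?_)
      exact hdecay m
    exact ge_of_tendsto' (ENNReal.tendsto_pow_atTop_nhds_zero_of_lt_one hq1) hb
  set B := {ω | X (i - 1) ω ≤ X i ω} with hBdef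
  have hBmeas : MeasurableSet B :=
    ((hmeas (i - 1)).prodMk (hmeas i)) hord
  have hAB : {ω | ¬ X (i - 1) ω ≤ X i ω} = Bᶜ := rfl
  set E : ℕ → Set Ω := fun n => {ω | ∀ a b : ℕ, i ≤ a → a < b → b < i + n → X a ω ≤ X b ω}
    with hEdef
  have hEmeas : ∀ n, MeasurableSet (E n) := by
    intro n
    rw [hEdef]
    simp only
    rw [stmt10_chainPre X i n]
    exact (measurable_pi_lambda _ fun l => hmeas _) (stmt10_chainSet_meas hord n)
  have hEP : ∀ n, P (E n) = L n := fun n => hchain i n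
  have hBE : ∀ n : ℕ, E (n + 1) ∩ B
      = {ω | ∀ a b : ℕ, i - 1 ≤ a → a < b → b < (i - 1) + (n + 2) → X a ω ≤ X b ω} := by
    intro n
    ext ω
    simp only [hEdef, hBdef, Set.mem_inter_iff, Set.mem_setOf_eq]
    constructor
    · rintro ⟨hc, hB⟩ a b h1 h2 h3
      by_cases hia : i ≤ a
      · exact hc a b hia h2 (by omega)
      · have ha : a = i - 1 := by omega
        subst ha
        by_cases hbi : b = i
        · subst hbi; exact hB
        · have hib : i < b := by omega
          exact le_trans hB (hc i b (le_refl i) hib (by omega))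
    · intro h
      refine ⟨fun a b h1 h2 h3 => h a b (by omega) h2 (by omega), ?_⟩
      exact h (i - 1) i (le_refl _) (by omega) (by omega)
  have key : ∀ n : ℕ, P (E (n + 1) ∩ Bᶜ) = L (n + 1) - L (n + 2) := by
    intro n
    have h1 : E (n + 1) ∩ Bᶜ = E (n + 1) \ (E (n + 1) ∩ B) := by
      ext ω
      simp only [Set.mem_inter_iff, Set.mem_compl_iff, Set.mem_diff]
      tauto
    rw [h1, measure_diff Set.inter_subset_left ((hEmeas _).inter hBmeas).nullMeasurableSet
      (measure_ne_top P _), hBE n, hchain (i - 1) (n + 2), hEP]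
  have hNsum : ∀ ω : Ω,
      (⨆ (n : ℕ) (_ : ∀ j k : ℕ, i ≤ j → j < k → k < i + n → X j ω ≤ X k ω), (n : ENNReal))
        = ∑' n : ℕ, Set.indicator {k : ℕ | ω ∈ E (k + 1)} (fun _ => (1 : ENNReal)) n := by
    intro ω
    exact stmt10_sup_eq_tsum (fun n => ω ∈ E n)
      (fun a b h1 h2 h3 => by omega)
      (fun m n hmn h a b h1 h2 h3 => h a b h1 h2 (by omega))
  have hint : (∫⁻ ω in Bᶜ,
      (⨆ (n : ℕ) (_ : ∀ j k : ℕ, i ≤ j → j < k → k < i + n → X j ω ≤ X k ω),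
        (n : ENNReal)) ∂P) = ∑' n : ℕ, (L (n + 1) - L (n + 2)) := by
    rw [lintegral_congr hNsum]
    have hswap : ∀ ω : Ω, (∑' n : ℕ, Set.indicator {k : ℕ | ω ∈ E (k + 1)}
        (fun _ => (1 : ENNReal)) n)
        = ∑' n : ℕ, Set.indicator (E (n + 1)) (fun _ => (1 : ENNReal)) ω := by
      intro ω
      refine tsum_congr fun n => ?_
      by_cases h : ω ∈ E (n + 1) <;> simp [Set.indicator_apply, h]
    rw [lintegral_congr hswap]
    rw [lintegral_tsum (f := fun n => (E (n + 1)).indicator (fun _ => (1 : ENNReal)))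
      (fun n => (measurable_const.indicator (hEmeas (n + 1))).aemeasurable)]
    refine tsum_congr fun n => ?_
    rw [lintegral_indicator (hEmeas (n + 1)), setLIntegral_one,
      Measure.restrict_apply (hEmeas (n + 1))]
    exact key n
  have htel : (∑' n : ℕ, (L (n + 1) - L (n + 2))) = 1 := by
    have hpart : ∀ N : ℕ, (∑ n ∈ Finset.range N, (L (n + 1) - L (n + 2)))
        = L 1 - L (N + 1) := by
      intro N
      induction N with
      | zero => simp
      | succ N ih =>
        rw [Finset.sum_range_succ, ih]
        have hba : L (N + 1) ≤ L 1 := hLanti 1 (N + 1) (by omega)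
        have hcb : L (N + 2) ≤ L (N + 1) := hLanti (N + 1) (N + 2) (by omega)
        have h1 : (L 1 - L (N + 1)) + (L (N + 1) - L (N + 2)) + L (N + 2) = L 1 := by
          rw [add_assoc, tsub_add_cancel_of_le hcb, tsub_add_cancel_of_le hba]
        exact ENNReal.eq_sub_of_add_eq (hLne (N + 2)) h1
    rw [ENNReal.tsum_eq_iSup_nat]
    rw [iSup_congr hpart, ← ENNReal.sub_iInf, hinf0, tsub_zero, hL1]
  have hPB : P B = q := hpair (i - 1) i (by omega)
  have hPBc : P Bᶜ = 1 - q := by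
    rw [prob_compl_eq_one_sub hBmeas, hPB]
  rw [hAB, hint, htel, hPBc, ENNReal.div_eq_inv_mul, mul_one]
end

section
/- For a fair n-sided die (uniform measure on {1,...,n}), given that a non-strict run starts at index i ≥ 1, the expected length of the run is 2n/(n−1), and for a strict run it is 2n/(n+1). -/
open MeasureTheory ProbabilityTheory

open scoped Classical in
lemma stmt14_sup_eq_tsum (p : ℕ → Prop) (hmono : ∀ m m' : ℕ, m' ≤ m → p m → p m')
    (h1 : p 1) :
    (⨆ (m : ℕ) (_ : p m), (m : ENNReal)) = ∑' m : ℕ, if p (m + 1) then (1 : ENNReal) else 0 := by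
  by_cases hall : ∀ m, p m
  · have hl : (⨆ (m : ℕ) (_ : p m), (m : ENNReal)) = ⊤ := by
      simp only [hall, iSup_pos]
      exact ENNReal.iSup_natCast
    have hr : (∑' m : ℕ, if p (m + 1) then (1 : ENNReal) else 0) = ⊤ := by
      simp only [hall, if_true]
      exact ENNReal.tsum_const_eq_top_of_ne_zero one_ne_zero
    rw [hl, hr]
  · push_neg at hall
    set M := Nat.find hall with hM
    have hMspec : ¬ p M := Nat.find_spec hall
    have hiff : ∀ m, p m ↔ m < M := by
      intro m
      constructor
      · intro h
        by_contra hc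
        push_neg at hc
        exact hMspec (hmono m M hc h)
      · intro h
        by_contra hc
        exact Nat.find_min hall h hc
    have h1M : 1 < M := (hiff 1).mp h1
    have hl : (⨆ (m : ℕ) (_ : p m), (m : ENNReal)) = ((M - 1 : ℕ) : ENNReal) := by
      apply le_antisymm
      · refine iSup₂_le fun m hm => ?_
        exact Nat.cast_le.mpr (by have := (hiff m).mp hm; omega)
      · have hp : p (M - 1) := (hiff _).mpr (by omega)
        exact le_iSup₂ (f := fun (m : ℕ) (_ : p m) => (m : ENNReal)) (M - 1) hp
    have hr : (∑' m : ℕ, if p (m + 1) then (1 : ENNReal) else 0) = ((M - 1 : ℕ) : ENNReal) := by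
      rw [tsum_eq_sum (s := Finset.range (M - 1)) ?_]
      · rw [Finset.sum_congr rfl (fun m hm => if_pos ((hiff _).mpr (by
          have := Finset.mem_range.mp hm; omega)))]
        simp
      · intro m hm
        rw [if_neg]
        intro h
        have := (hiff _).mp h
        have := Finset.mem_range.not.mp hm
        omega
    rw [hl, hr]
lemma stmt14_joint {Ω : Type*} [MeasurableSpace Ω] (P : Measure Ω) [IsProbabilityMeasure P]
    {n : ℕ} (μ : Measure (Fin n))
    (hunif : ∀ k : Fin n, μ {k} = (n : ENNReal)⁻¹)
    (X : ℕ → Ω → Fin n) (hmeas : ∀ i, Measurable (X i))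
    (hindep : iIndepFun X P)
    (hdist : ∀ i, P.map (X i) = μ)
    (k : ℕ) (j : Fin k → ℕ) (hj : Function.Injective j)
    (S : Finset (Fin k → Fin n)) :
    P {ω | (fun t => X (j t) ω) ∈ S} = S.card * ((n : ENNReal)⁻¹) ^ k := by
  classical
  have hfiber : ∀ (f : Fin k → Fin n),
      {ω : Ω | (fun t => X (j t) ω) = f} = ⋂ t, X (j t) ⁻¹' {f t} := by
    intro f
    ext ω
    simp [funext_iff]
  have hfibermeas : ∀ (f : Fin k → Fin n),
      MeasurableSet {ω : Ω | (fun t => X (j t) ω) = f} := by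
    intro f
    rw [hfiber f]
    exact MeasurableSet.iInter fun t => (hmeas _) (measurableSet_singleton _)
  have hsingle : ∀ (f : Fin k → Fin n),
      P {ω | (fun t => X (j t) ω) = f} = ((n : ENNReal)⁻¹) ^ k := by
    intro f
    set sets : ℕ → Set (Fin n) := fun a => {x | ∀ t, j t = a → x = f t} with hsets
    have hsets_eq : ∀ t, sets (j t) = {f t} := by
      intro t
      ext x
      simp only [hsets, Set.mem_setOf_eq, Set.mem_singleton_iff]
      constructor
      · exact fun h => h t rfl
      · rintro rfl t' ht'
        rw [hj ht']
    have hkey := hindep.measure_inter_preimage_eq_mul (Finset.univ.image j)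
      (sets := sets) (fun a _ => (Set.toFinite _).measurableSet)
    have hset : (⋂ a ∈ Finset.univ.image j, X a ⁻¹' sets a)
        = {ω : Ω | (fun t => X (j t) ω) = f} := by
      ext ω
      simp only [Set.mem_iInter, Finset.mem_image, Finset.mem_univ, true_and,
        Set.mem_preimage, Set.mem_setOf_eq]
      constructor
      · intro h
        funext t
        have h2 := h (j t) ⟨t, rfl⟩
        rw [hsets_eq t] at h2
        exact h2
      · intro h
        rintro a ⟨t, rfl⟩
        rw [hsets_eq t]
        exact congrFun h t
    have hprod : (∏ a ∈ Finset.univ.image j, P (X a ⁻¹' sets a)) = ((n : ENNReal)⁻¹) ^ k := by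
      rw [Finset.prod_image (fun t _ t' _ h => hj h)]
      have hone : ∀ t : Fin k, P (X (j t) ⁻¹' sets (j t)) = (n : ENNReal)⁻¹ := by
        intro t
        rw [hsets_eq t, ← Measure.map_apply (hmeas _) (measurableSet_singleton _), hdist]
        exact hunif _
      rw [Finset.prod_congr rfl (fun t _ => hone t), Finset.prod_const, Finset.card_univ,
        Fintype.card_fin]
    rw [← hset, hkey, hprod]
  have hdecomp : {ω : Ω | (fun t => X (j t) ω) ∈ S}
      = ⋃ f ∈ S, {ω : Ω | (fun t => X (j t) ω) = f} := by
    ext ω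
    simp
  rw [hdecomp, measure_biUnion_finset ?_ (fun f _ => hfibermeas f)]
  · rw [Finset.sum_congr rfl (fun f _ => hsingle f), Finset.sum_const, nsmul_eq_mul]
  · intro f _ g _ hfg
    refine Set.disjoint_left.mpr fun ω h1 h2 => hfg ?_
    exact h1.symm.trans h2

open MeasureTheory ProbabilityTheory

set_option maxRecDepth 4000 in
open scoped Classical in
lemma stmt14_key {Ω : Type*} [MeasurableSpace Ω] (P : Measure Ω) [IsProbabilityMeasure P]
    (n : ℕ) (hn : 2 ≤ n) (μ : Measure (Fin n)) [IsProbabilityMeasure μ]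
    (hunif : ∀ k : Fin n, μ {k} = (n : ENNReal)⁻¹)
    (X : ℕ → Ω → Fin n) (hmeas : ∀ i, Measurable (X i))
    (hindep : iIndepFun X P)
    (hdist : ∀ i, P.map (X i) = μ)
    (i : ℕ) (hi : 1 ≤ i)
    (r : Fin n → Fin n → Prop) (htrans : ∀ {a b c : Fin n}, r a b → r b c → r a c)
    (hcard : Nat.card {p : Fin n × Fin n // r p.1 p.2} < n ^ 2) :
    (∫⁻ ω in {ω | ¬ r (X (i - 1) ω) (X i ω)},
        (⨆ (m : ℕ) (_ : ∀ j k : ℕ, i ≤ j → j < k → k < i + m → r (X j ω) (X k ω)),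
          (m : ENNReal)) ∂P) = 1
    ∧ P {ω | ¬ r (X (i - 1) ω) (X i ω)}
      = ((Nat.card {p : Fin n × Fin n // ¬ r p.1 p.2}) : ENNReal)
        * ((n : ENNReal)⁻¹) ^ 2 := by
  have hn0 : (n : ENNReal) ≠ 0 := Nat.cast_ne_zero.mpr (by omega)
  have hntop : (n : ENNReal) ≠ ⊤ := ENNReal.natCast_ne_top n
  -- joint lemma is stmt14_joint (assumed proven above)
  set Rcard : ℕ := (Finset.univ.filter fun p : Fin n × Fin n => r p.1 p.2).card with hRcard
  have hRN : Nat.card {p : Fin n × Fin n // r p.1 p.2} = Rcard := by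
    rw [Nat.card_eq_fintype_card, Fintype.card_subtype]
  rw [hRN] at hcard
  set N : ℕ → ℕ := fun m => (Finset.univ.filter
      (fun f : Fin (m + 1) → Fin n => ∀ t : ℕ, ∀ h : t < m,
        r (f ⟨t, Nat.lt_succ_of_lt h⟩) (f ⟨t + 1, Nat.succ_lt_succ h⟩))).card with hN
  set q : ℕ → ENNReal := fun m => (N m : ENNReal) * ((n : ENNReal)⁻¹) ^ (m + 1) with hq
  set E : ℕ → ℕ → Set Ω :=
    fun a m => {ω | ∀ t : ℕ, t < m → r (X (a + t) ω) (X (a + t + 1) ω)} with hE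
  set A : Set Ω := {ω | ¬ r (X (i - 1) ω) (X i ω)} with hA
  -- measurability helpers
  have hpairmeas : ∀ (a b : ℕ) (s : Set (Fin n × Fin n)),
      MeasurableSet {ω | (X a ω, X b ω) ∈ s} :=
    fun a b s => ((hmeas a).prodMk (hmeas b)) ((Set.toFinite s).measurableSet)
  have hEmeas : ∀ a m, MeasurableSet (E a m) := by
    intro a m
    have : E a m = ⋂ (t : ℕ), ⋂ (_ : t < m),
        {ω | (X (a + t) ω, X (a + t + 1) ω) ∈ {p : Fin n × Fin n | r p.1 p.2}} := by
      ext ω; simp [hE]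
    rw [this]
    exact MeasurableSet.iInter fun t => MeasurableSet.iInter fun _ => hpairmeas _ _ _
  have hAmeas : MeasurableSet A := hpairmeas (i - 1) i {p | ¬ r p.1 p.2}
  -- P (E a m) = q m
  have hPE : ∀ a m, P (E a m) = q m := by
    intro a m
    have hj : Function.Injective (fun t : Fin (m + 1) => a + (t : ℕ)) := by
      intro t1 t2 h
      have h' : a + (t1 : ℕ) = a + (t2 : ℕ) := h
      exact Fin.ext (by omega)
    have hset : E a m = {ω | (fun t : Fin (m + 1) => X (a + (t : ℕ)) ω) ∈
        Finset.univ.filter (fun f : Fin (m + 1) → Fin n => ∀ t : ℕ, ∀ h : t < m,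
          r (f ⟨t, Nat.lt_succ_of_lt h⟩) (f ⟨t + 1, Nat.succ_lt_succ h⟩))} := by
      ext ω
      simp only [hE, Set.mem_setOf_eq, Finset.mem_filter, Finset.mem_univ, true_and]
      constructor
      · intro h t ht; exact h t ht
      · intro h t ht; exact h t ht
    rw [hset, stmt14_joint P μ hunif X hmeas hindep hdist (m + 1) _ hj _]
  have hq0 : q 0 = 1 := by
    have h1 : E i 0 = Set.univ := by ext ω; simp [hE]
    rw [← hPE i 0, h1, measure_univ]
  have hqmono : ∀ m, q (m + 1) ≤ q m := by
    intro m
    rw [← hPE i m, ← hPE i (m + 1)]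
    exact measure_mono (fun ω h t ht => h t (by omega))
  have hqle : ∀ m m', m ≤ m' → q m' ≤ q m := by
    intro m m' h
    induction m' with
    | zero => simp_all
    | succ k ih =>
      rcases Nat.lt_or_ge m (k + 1) with h' | h'
      · exact le_trans (hqmono k) (ih (by omega))
      · have : m = k + 1 := by omega
        simp [this]
  -- decay
  set c : ENNReal := (Rcard : ENNReal) * ((n : ENNReal)⁻¹) ^ 2 with hc
  have hNdecay : ∀ m, N (m + 2) ≤ N m * Rcard := by
    intro m
    rw [hN, hRcard, ← Finset.card_product]
    refine Finset.card_le_card_of_injOn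
      (fun f => ((fun t : Fin (m + 1) => f ⟨(t : ℕ), by omega⟩),
        (f ⟨m + 1, by omega⟩, f ⟨m + 2, by omega⟩))) ?_ ?_
    · intro f hf
      simp only [Finset.mem_coe, Finset.mem_filter, Finset.mem_univ, true_and] at hf
      simp only [Finset.mem_coe, Finset.mem_product, Finset.mem_filter, Finset.mem_univ, true_and]
      exact ⟨fun t ht => hf t (by omega), hf (m + 1) (by omega)⟩
    · intro f hf g hg h
      simp only [Prod.mk.injEq] at h
      funext s
      rcases s with ⟨sv, hs⟩
      rcases Nat.lt_or_ge sv (m + 1) with h' | h'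
      · exact congrFun h.1 ⟨sv, h'⟩
      · rcases Nat.lt_or_ge sv (m + 2) with h'' | h''
        · have hsv : sv = m + 1 := by omega
          subst hsv
          exact h.2.1
        · have hsv : sv = m + 2 := by omega
          subst hsv
          exact h.2.2
  have hqdecay : ∀ m, q (m + 2) ≤ q m * c := by
    intro m
    have h1 : (N (m + 2) : ENNReal) ≤ (N m : ENNReal) * (Rcard : ENNReal) := by
      rw [← Nat.cast_mul]
      exact Nat.cast_le.mpr (hNdecay m)
    calc q (m + 2) = (N (m + 2) : ENNReal) * ((n : ENNReal)⁻¹) ^ (m + 3) := rfl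
      _ ≤ ((N m : ENNReal) * (Rcard : ENNReal)) * ((n : ENNReal)⁻¹) ^ (m + 3) :=
          mul_le_mul_left h1 _
      _ = ((N m : ENNReal) * ((n : ENNReal)⁻¹) ^ (m + 1))
          * ((Rcard : ENNReal) * ((n : ENNReal)⁻¹) ^ 2) := by ring
      _ = q m * c := rfl
  have hclt : c < 1 := by
    have hlt : (Rcard : ENNReal) < ((n : ENNReal)) ^ 2 := by
      rw [← Nat.cast_pow]
      exact Nat.cast_lt.mpr hcard
    have hinv0 : (((n : ENNReal)) ^ 2)⁻¹ ≠ 0 := by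
      simp [ENNReal.inv_ne_zero, ENNReal.pow_ne_top hntop]
    have hinvtop : (((n : ENNReal)) ^ 2)⁻¹ ≠ ⊤ := by
      simp [ENNReal.inv_ne_top, pow_ne_zero _ hn0]
    calc c = (Rcard : ENNReal) * (((n : ENNReal)) ^ 2)⁻¹ := by rw [hc, ENNReal.inv_pow]
      _ < ((n : ENNReal)) ^ 2 * (((n : ENNReal)) ^ 2)⁻¹ :=
          by rw [mul_comm (Rcard : ENNReal), mul_comm ((n : ENNReal) ^ 2)]; exact ENNReal.mul_lt_mul_right hinv0 hinvtop hlt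
      _ = 1 := ENNReal.mul_inv_cancel (pow_ne_zero _ hn0) (ENNReal.pow_ne_top hntop)
  have hqpow : ∀ k : ℕ, q (2 * k) ≤ c ^ k := by
    intro k
    induction k with
    | zero => simp [hq0]
    | succ k ih =>
      have : 2 * (k + 1) = 2 * k + 2 := by ring
      rw [this, pow_succ]
      exact le_trans (hqdecay (2 * k)) (mul_le_mul_left ih c)
  have hinfq : (⨅ m, q m) = 0 := by
    have hanti : Antitone fun k : ℕ => c ^ k :=
      fun a b h => pow_le_pow_right_of_le_one' hclt.le h
    have htend : Filter.Tendsto (fun k : ℕ => c ^ k) Filter.atTop (nhds 0) :=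
      ENNReal.tendsto_pow_atTop_nhds_zero_of_lt_one hclt
    have hpow0 : (⨅ k : ℕ, c ^ k) = 0 :=
      tendsto_nhds_unique (tendsto_atTop_iInf hanti) htend
    refine le_antisymm ?_ zero_le
    rw [← hpow0]
    exact le_iInf fun k => le_trans (iInf_le q (2 * k)) (hqpow k)
  -- second conjunct : P A
  have hNR : Nat.card {p : Fin n × Fin n // ¬ r p.1 p.2}
      = (Finset.univ.filter fun p : Fin n × Fin n => ¬ r p.1 p.2).card := by
    rw [Nat.card_eq_fintype_card, Fintype.card_subtype]
  have hPA : P A = ((Finset.univ.filter fun p : Fin n × Fin n => ¬ r p.1 p.2).card : ENNReal)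
      * ((n : ENNReal)⁻¹) ^ 2 := by
    have hij : Function.Injective (![i - 1, i] : Fin 2 → ℕ) := by
      have hne : i - 1 ≠ i := by omega
      intro t1 t2 h
      fin_cases t1 <;> fin_cases t2 <;>
        simp only [Matrix.cons_val_zero, Matrix.cons_val_one, Matrix.head_cons] at h <;>
        first | rfl | exact absurd h hne | exact absurd h.symm hne
    have hset : A = {ω | (fun t : Fin 2 => X ((![i - 1, i] : Fin 2 → ℕ) t) ω) ∈
        Finset.univ.filter (fun f : Fin 2 → Fin n => ¬ r (f 0) (f 1))} := by
      ext ω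
      simp only [hA, Set.mem_setOf_eq, Finset.mem_filter, Finset.mem_univ, true_and,
        Matrix.cons_val_zero, Matrix.cons_val_one, Matrix.head_cons]
    have hcard2 : (Finset.univ.filter (fun f : Fin 2 → Fin n => ¬ r (f 0) (f 1))).card
        = (Finset.univ.filter fun p : Fin n × Fin n => ¬ r p.1 p.2).card := by
      refine Finset.card_bij' (fun f _ => (f 0, f 1)) (fun p _ => ![p.1, p.2]) ?_ ?_ ?_ ?_
      · intro f hf
        simp only [Finset.mem_filter, Finset.mem_univ, true_and] at hf ⊢
        exact hf
      · intro p hp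
        simp only [Finset.mem_filter, Finset.mem_univ, true_and] at hp ⊢
        simpa using hp
      · intro f _
        funext t
        fin_cases t <;> simp
      · intro p _
        simp
    rw [hset, stmt14_joint P μ hunif X hmeas hindep hdist 2 _ hij _, hcard2]
  refine ⟨?_, by rw [hPA, hNR]⟩
  -- the chain condition equivalence
  have hcond : ∀ (ω : Ω) (m : ℕ),
      (∀ j k : ℕ, i ≤ j → j < k → k < i + (m + 1) → r (X j ω) (X k ω)) ↔ ω ∈ E i m := by
    intro ω m
    constructor
    · intro h t ht
      exact h (i + t) (i + t + 1) (by omega) (by omega) (by omega)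
    · intro h j k hj hjk hk
      obtain ⟨d, rfl⟩ : ∃ d, k = j + d + 1 := ⟨k - j - 1, by omega⟩
      clear hjk
      induction d with
      | zero =>
        have h1 := h (j - i) (by omega)
        have h2 : i + (j - i) = j := by omega
        rw [h2] at h1
        simpa using h1
      | succ d ih =>
        have h1 := h (j + d + 1 - i) (by omega)
        have h2 : i + (j + d + 1 - i) = j + d + 1 := by omega
        rw [h2] at h1
        have e : j + (d + 1) + 1 = j + d + 1 + 1 := by omega
        rw [e]
        exact htrans (ih (by omega)) h1
  -- pointwise identity
  have hpt : ∀ ω : Ω,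
      (⨆ (m : ℕ) (_ : ∀ j k : ℕ, i ≤ j → j < k → k < i + m → r (X j ω) (X k ω)),
        (m : ENNReal))
      = ∑' m : ℕ, Set.indicator (E i m) (1 : Ω → ENNReal) ω := by
    intro ω
    rw [stmt14_sup_eq_tsum
      (fun m => ∀ j k : ℕ, i ≤ j → j < k → k < i + m → r (X j ω) (X k ω))
      (fun m m' hle h j k hj hjk hk => h j k hj hjk (by omega))
      (fun j k hj hjk hk => absurd hk (by omega))]
    refine tsum_congr fun m => ?_
    simp only [Set.indicator_apply, Pi.one_apply]
    exact if_congr (hcond ω m) rfl rfl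
  -- per-term measure
  have hterm : ∀ m, P (E i m ∩ A) = q m - q (m + 1) := by
    intro m
    have hsplit : E i m ∩ {ω | r (X (i - 1) ω) (X i ω)} = E (i - 1) (m + 1) := by
      ext ω
      simp only [hE, Set.mem_inter_iff, Set.mem_setOf_eq]
      constructor
      · rintro ⟨hch, hr0⟩ t ht
        rcases Nat.eq_zero_or_pos t with rfl | htpos
        · have e1 : i - 1 + 0 = i - 1 := by omega
          have e2 : i - 1 + 0 + 1 = i := by omega
          rw [e2, e1]
          exact hr0
        · obtain ⟨s, rfl⟩ : ∃ s, t = s + 1 := ⟨t - 1, by omega⟩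
          have e1 : i - 1 + (s + 1) = i + s := by omega
          have e2 : i - 1 + (s + 1) + 1 = i + s + 1 := by omega
          rw [e2, e1]
          exact hch s (by omega)
      · intro h
        constructor
        · intro t ht
          have h1 := h (t + 1) (by omega)
          have e1 : i - 1 + (t + 1) = i + t := by omega
          have e2 : i - 1 + (t + 1) + 1 = i + t + 1 := by omega
          rw [e2, e1] at h1
          exact h1
        · have h1 := h 0 (by omega)
          have e1 : i - 1 + 0 = i - 1 := by omega
          have e2 : i - 1 + 0 + 1 = i := by omega
          rw [e2, e1] at h1
          exact h1
    have hdiff : E i m ∩ A = E i m \ (E i m ∩ {ω | r (X (i - 1) ω) (X i ω)}) := by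
      ext ω
      simp only [hA, Set.mem_inter_iff, Set.mem_diff, Set.mem_setOf_eq]
      tauto
    have hrmeas : MeasurableSet {ω : Ω | r (X (i - 1) ω) (X i ω)} :=
      hpairmeas (i - 1) i {p | r p.1 p.2}
    rw [hdiff, measure_diff Set.inter_subset_left
      ((hEmeas i m).inter hrmeas).nullMeasurableSet
      (measure_ne_top P _), hsplit, hPE, hPE]
  -- final computation
  calc ∫⁻ ω in A,
        (⨆ (m : ℕ) (_ : ∀ j k : ℕ, i ≤ j → j < k → k < i + m → r (X j ω) (X k ω)),
          (m : ENNReal)) ∂P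
      = ∫⁻ ω in A, ∑' m : ℕ, Set.indicator (E i m) (1 : Ω → ENNReal) ω ∂P :=
        lintegral_congr fun ω => hpt ω
    _ = ∑' m : ℕ, ∫⁻ ω in A, Set.indicator (E i m) (1 : Ω → ENNReal) ω ∂P :=
        lintegral_tsum fun m => (measurable_const.indicator (hEmeas i m)).aemeasurable
    _ = ∑' m : ℕ, (q m - q (m + 1)) := by
        refine tsum_congr fun m => ?_
        rw [lintegral_indicator_one (hEmeas i m), Measure.restrict_apply (hEmeas i m), hterm m]
    _ = 1 := by
        rw [ENNReal.tsum_eq_iSup_nat]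
        have hpartial : ∀ K : ℕ, (∑ m ∈ Finset.range K, (q m - q (m + 1))) = q 0 - q K := by
          intro K
          induction K with
          | zero => simp
          | succ K ih =>
            rw [Finset.sum_range_succ, ih]
            exact tsub_add_tsub_cancel (hqle 0 K (by omega)) (hqmono K)
        simp_rw [hpartial]
        rw [← ENNReal.sub_iInf, hinfq, hq0, tsub_zero]

open scoped Classical in
lemma stmt14_cards (n : ℕ) :
    (Finset.univ.filter fun p : Fin n × Fin n => p.1 < p.2).card
      + (Finset.univ.filter fun p : Fin n × Fin n => p.1 ≤ p.2).card = n ^ 2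
    ∧ (Finset.univ.filter fun p : Fin n × Fin n => p.1 ≤ p.2).card
      = (Finset.univ.filter fun p : Fin n × Fin n => p.1 < p.2).card + n := by
  have hswap : (Finset.univ.filter fun p : Fin n × Fin n => p.2 ≤ p.1).card
      = (Finset.univ.filter fun p : Fin n × Fin n => p.1 ≤ p.2).card := by
    refine Finset.card_bij' (fun p _ => (p.2, p.1)) (fun p _ => (p.2, p.1)) ?_ ?_ ?_ ?_ <;>
      simp +contextual [Finset.mem_filter]
  have hA : (Finset.univ.filter fun p : Fin n × Fin n => p.1 < p.2).card
      + (Finset.univ.filter fun p : Fin n × Fin n => p.2 ≤ p.1).card = n ^ 2 := by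
    have := Finset.card_filter_add_card_filter_not
      (s := (Finset.univ : Finset (Fin n × Fin n))) (p := fun p => p.1 < p.2)
    rw [Finset.filter_congr (fun p _ => by simp [not_lt] :
      ∀ p ∈ (Finset.univ : Finset (Fin n × Fin n)), (¬ p.1 < p.2) ↔ p.2 ≤ p.1)] at this
    simpa [Fintype.card_prod, sq] using this
  have hdiag : (Finset.univ.filter fun p : Fin n × Fin n => p.1 = p.2).card = n := by
    have : (Finset.univ.filter fun p : Fin n × Fin n => p.1 = p.2).card
        = (Finset.univ : Finset (Fin n)).card := by
      refine Finset.card_bij' (fun p _ => p.1) (fun a _ => (a, a)) ?_ ?_ ?_ ?_ <;>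
        simp +contextual [Finset.mem_filter]
    simpa using this
  have hB : (Finset.univ.filter fun p : Fin n × Fin n => p.1 ≤ p.2).card
      = (Finset.univ.filter fun p : Fin n × Fin n => p.1 < p.2).card + n := by
    rw [Finset.filter_congr (fun p _ => (le_iff_lt_or_eq :
          p.1 ≤ p.2 ↔ p.1 < p.2 ∨ p.1 = p.2) :
      ∀ p ∈ (Finset.univ : Finset (Fin n × Fin n)), (p.1 ≤ p.2) ↔ (p.1 < p.2 ∨ p.1 = p.2)),
      Finset.filter_or, Finset.card_union_of_disjoint, hdiag]
    refine Finset.disjoint_left.mpr ?_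
    intro p hp hq
    simp only [Finset.mem_filter] at hp hq
    exact absurd hq.2 (ne_of_lt hp.2)
  exact ⟨by rw [← hswap] at hB ⊢; omega, hB⟩

open scoped Classical in
lemma stmt14_cards2 (n : ℕ) :
    (Finset.univ.filter fun p : Fin n × Fin n => ¬ p.1 ≤ p.2).card
      = (Finset.univ.filter fun p : Fin n × Fin n => p.1 < p.2).card
    ∧ (Finset.univ.filter fun p : Fin n × Fin n => ¬ p.1 < p.2).card
      = (Finset.univ.filter fun p : Fin n × Fin n => p.1 ≤ p.2).card := by
  constructor
  · rw [Finset.filter_congr (fun p _ => by simp [not_le] :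
      ∀ p ∈ (Finset.univ : Finset (Fin n × Fin n)), (¬ p.1 ≤ p.2) ↔ p.2 < p.1)]
    refine Finset.card_bij' (fun p _ => (p.2, p.1)) (fun p _ => (p.2, p.1)) ?_ ?_ ?_ ?_ <;>
      simp +contextual [Finset.mem_filter]
  · rw [Finset.filter_congr (fun p _ => by simp [not_lt] :
      ∀ p ∈ (Finset.univ : Finset (Fin n × Fin n)), (¬ p.1 < p.2) ↔ p.2 ≤ p.1)]
    refine Finset.card_bij' (fun p _ => (p.2, p.1)) (fun p _ => (p.2, p.1)) ?_ ?_ ?_ ?_ <;>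
      simp +contextual [Finset.mem_filter]

/-- for i.i.d. rolls of a fair n-sided die (uniform on `Fin n`, n ≥ 2) and i ≥ 1,
the conditional expected length of the non-strict run starting at i (given X_{i−1} ≰ Xᵢ) is
2n/(n−1), and of the strict run starting at i (given X_{i−1} ≮ Xᵢ) is 2n/(n+1). -/
theorem stmt14 {Ω : Type*} [MeasurableSpace Ω] (P : Measure Ω) [IsProbabilityMeasure P]
    (n : ℕ) (hn : 2 ≤ n) (μ : Measure (Fin n)) [IsProbabilityMeasure μ]
    (hunif : ∀ k : Fin n, μ {k} = (n : ENNReal)⁻¹)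
    (X : ℕ → Ω → Fin n) (hmeas : ∀ i, Measurable (X i))
    (hindep : iIndepFun X P)
    (hdist : ∀ i, P.map (X i) = μ)
    (i : ℕ) (hi : 1 ≤ i) :
    ((∫⁻ ω in {ω | ¬ X (i - 1) ω ≤ X i ω},
        (⨆ (m : ℕ) (_ : ∀ j k : ℕ, i ≤ j → j < k → k < i + m → X j ω ≤ X k ω),
          (m : ENNReal)) ∂P)
      / P {ω | ¬ X (i - 1) ω ≤ X i ω}
      = (2 * n : ENNReal) / ((n : ENNReal) - 1))
    ∧ ((∫⁻ ω in {ω | ¬ X (i - 1) ω < X i ω},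
        (⨆ (m : ℕ) (_ : ∀ j k : ℕ, i ≤ j → j < k → k < i + m → X j ω < X k ω),
          (m : ENNReal)) ∂P)
      / P {ω | ¬ X (i - 1) ω < X i ω}
      = (2 * n : ENNReal) / ((n : ENNReal) + 1)) := by
  classical
  obtain ⟨h1, h2⟩ := stmt14_cards n
  obtain ⟨c3, c4⟩ := stmt14_cards2 n
  set cl : ℕ := (Finset.univ.filter fun p : Fin n × Fin n => p.1 < p.2).card with hcl
  set ce : ℕ := (Finset.univ.filter fun p : Fin n × Fin n => p.1 ≤ p.2).card with hce
  have hclpos : 0 < cl := by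
    rw [hcl]
    refine Finset.card_pos.mpr ⟨((⟨0, by omega⟩ : Fin n), (⟨1, by omega⟩ : Fin n)), ?_⟩
    exact Finset.mem_filter.mpr ⟨Finset.mem_univ _, Fin.mk_lt_mk.mpr (by omega)⟩
  have hcepos : 0 < ce := by omega
  have hn0 : (n : ENNReal) ≠ 0 := Nat.cast_ne_zero.mpr (by omega)
  have hntop : (n : ENNReal) ≠ ⊤ := ENNReal.natCast_ne_top n
  have hNle : Nat.card {p : Fin n × Fin n // p.1 ≤ p.2} = ce := by
    rw [Nat.card_eq_fintype_card, Fintype.card_subtype]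
  have hNlt : Nat.card {p : Fin n × Fin n // p.1 < p.2} = cl := by
    rw [Nat.card_eq_fintype_card, Fintype.card_subtype]
  have hNnle : Nat.card {p : Fin n × Fin n // ¬ p.1 ≤ p.2} = cl := by
    rw [Nat.card_eq_fintype_card, Fintype.card_subtype]
    exact c3
  have hNnlt : Nat.card {p : Fin n × Fin n // ¬ p.1 < p.2} = ce := by
    rw [Nat.card_eq_fintype_card, Fintype.card_subtype]
    exact c4
  have harith : ∀ (d : ℕ) (w : ENNReal), 0 < d → w ≠ 0 → w ≠ ⊤ →
      w * (n : ENNReal) ^ 2 = (d : ENNReal) * (2 * n) →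
      1 / ((d : ENNReal) * ((n : ENNReal)⁻¹) ^ 2) = 2 * (n : ENNReal) / w := by
    intro d w hd hw0 hwtop hrel
    have hd0 : (d : ENNReal) ≠ 0 := Nat.cast_ne_zero.mpr (by omega)
    have hdtop : (d : ENNReal) ≠ ⊤ := ENNReal.natCast_ne_top d
    have hstep : (d : ENNReal) * ((n : ENNReal)⁻¹) ^ 2 = (d : ENNReal) / (n : ENNReal) ^ 2 := by
      rw [← ENNReal.inv_pow, div_eq_mul_inv]
    rw [hstep, one_div, ENNReal.inv_div (Or.inr hdtop) (Or.inl (pow_ne_zero 2 hn0))]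
    rw [ENNReal.div_eq_div_iff hw0 hwtop hd0 hdtop]
    exact hrel
  constructor
  · obtain ⟨hint, hPA⟩ := stmt14_key P n hn μ hunif X hmeas hindep hdist i hi
      (fun a b => a ≤ b) (fun hab hbc => le_trans hab hbc)
      (show Nat.card {p : Fin n × Fin n // p.1 ≤ p.2} < n ^ 2 by rw [hNle]; omega)
    have hPA' : P {ω | ¬ X (i - 1) ω ≤ X i ω} = (cl : ENNReal) * ((n : ENNReal)⁻¹) ^ 2 := by
      rw [hPA]
      exact congrArg (fun k : ℕ => ((k : ENNReal) * ((n : ENNReal)⁻¹) ^ 2)) hNnle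
    rw [hint, hPA']
    refine harith cl ((n : ENNReal) - 1) hclpos ?_ ?_ ?_
    · rw [← Nat.cast_one (R := ENNReal), ← ENNReal.natCast_sub]
      exact Nat.cast_ne_zero.mpr (by omega)
    · exact ne_top_of_le_ne_top hntop tsub_le_self
    · rw [← Nat.cast_one (R := ENNReal), ← ENNReal.natCast_sub]
      have hnat : (n - 1) * n ^ 2 = cl * (2 * n) := by
        obtain ⟨m, rfl⟩ : ∃ m, n = m + 1 := ⟨n - 1, by omega⟩
        have h2cl : 2 * cl + (m + 1) = (m + 1) ^ 2 := by omega
        have key : m * (m + 1) ^ 2 + (m + 1) ^ 2 = cl * (2 * (m + 1)) + (m + 1) ^ 2 := by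
          calc m * (m + 1) ^ 2 + (m + 1) ^ 2 = (m + 1) * (m + 1) ^ 2 := by ring
            _ = (m + 1) * (2 * cl + (m + 1)) := by rw [← h2cl]
            _ = cl * (2 * (m + 1)) + (m + 1) ^ 2 := by ring
        have hkey := Nat.add_right_cancel key
        simpa using hkey
      exact_mod_cast hnat
  · obtain ⟨hint, hPA⟩ := stmt14_key P n hn μ hunif X hmeas hindep hdist i hi
      (fun a b => a < b) (fun hab hbc => lt_trans hab hbc)
      (show Nat.card {p : Fin n × Fin n // p.1 < p.2} < n ^ 2 by rw [hNlt]; omega)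
    have hPA' : P {ω | ¬ X (i - 1) ω < X i ω} = (ce : ENNReal) * ((n : ENNReal)⁻¹) ^ 2 := by
      rw [hPA]
      exact congrArg (fun k : ℕ => ((k : ENNReal) * ((n : ENNReal)⁻¹) ^ 2)) hNnlt
    rw [hint, hPA']
    refine harith ce ((n : ENNReal) + 1) hcepos ?_ ?_ ?_
    · simp
    · rw [← Nat.cast_one (R := ENNReal), ← Nat.cast_add]
      exact ENNReal.natCast_ne_top _
    · rw [← Nat.cast_one (R := ENNReal), ← Nat.cast_add]
      have hnat : (n + 1) * n ^ 2 = ce * (2 * n) := by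
        have h2ce : 2 * ce = n ^ 2 + n := by omega
        calc (n + 1) * n ^ 2 = n * (n ^ 2 + n) := by ring
          _ = n * (2 * ce) := by rw [← h2ce]
          _ = ce * (2 * n) := by ring
      exact_mod_cast hnat
end

section
/- Let μ₁, μ₂ be finite measures on partial orders T₁, T₂ and let T₁ ⊗ T₂ be the ordinal (series) sum, where every element of T₁ is below every element of T₂, equipped with the measure μ₁ ⊗ μ₂ agreeing with μᵢ on Tᵢ. Then for every n ≥ 0, the strict run coefficient satisfies Lₙ(μ₁ ⊗ μ₂) = Σ_{k=0}^{n} Lₖ(μ₁)·L_{n−k}(μ₂), where Lₙ(μ) = μⁿ({a₁ < ... < aₙ}), L₀ = 1, L₁ = ‖μ‖. Equivalently, the generating series multiply: P_{μ₁⊗μ₂}(Z) = P_{μ₁}(Z)·P_{μ₂}(Z). -/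
open MeasureTheory

/-- The n-th strict run coefficient Lₙ(μ) = μⁿ({a₁ < ... < aₙ}), with L₀ = 1, L₁ = ‖μ‖. -/
noncomputable def runCoeff {T : Type*} [MeasurableSpace T] [Preorder T]
    (μ : Measure T) (n : ℕ) : ENNReal :=
  (Measure.pi fun _ : Fin n => μ) {f : Fin n → T | StrictMono f}

instance lexSumMeasurableSpace {T₁ T₂ : Type*} [MeasurableSpace T₁] [MeasurableSpace T₂] :
    MeasurableSpace (T₁ ⊕ₗ T₂) :=
  inferInstanceAs (MeasurableSpace (T₁ ⊕ T₂))

section Aux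
variable {α : Type*} [MeasurableSpace α]

/-- Finite additivity of (outer) measure over disjoint measurable pieces covering a set. -/
lemma aux_measure_eq_sum_of_subset_biUnion {ι : Type*} (μ : Measure α) (s : Finset ι)
    {C : ι → Set α} (hC : ∀ k, MeasurableSet (C k))
    (hdisj : ∀ k ∈ s, ∀ l ∈ s, k ≠ l → Disjoint (C k) (C l))
    {A : Set α} (hA : A ⊆ ⋃ k ∈ s, C k) :
    μ A = ∑ k ∈ s, μ (A ∩ C k) := by
  classical
  induction s using Finset.induction_on generalizing A with
  | empty =>
      simp only [Finset.notMem_empty, Set.iUnion_of_empty, Set.iUnion_empty] at hA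
      simp [Set.subset_empty_iff.1 hA]
  | @insert a s ha ih =>
      have h1 : μ A = μ (A ∩ C a) + μ (A \ C a) := (measure_inter_add_diff A (hC a)).symm
      have h2 : A \ C a ⊆ ⋃ k ∈ s, C k := by
        intro x hx
        have := hA hx.1
        simp only [Finset.mem_insert, Set.mem_iUnion, exists_prop] at this ⊢
        obtain ⟨k, hk | hk, hxk⟩ := this
        · exact absurd (hk ▸ hxk) hx.2
        · exact ⟨k, hk, hxk⟩
      have h3 : μ (A \ C a) = ∑ k ∈ s, μ ((A \ C a) ∩ C k) :=
        ih (fun k hk l hl hkl => hdisj k (Finset.mem_insert_of_mem hk) l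
          (Finset.mem_insert_of_mem hl) hkl) h2
      have h4 : ∀ k ∈ s, (A \ C a) ∩ C k = A ∩ C k := by
        intro k hk
        have hd : Disjoint (C a) (C k) :=
          hdisj a (Finset.mem_insert_self a s) k (Finset.mem_insert_of_mem hk)
            (fun h => ha (h ▸ hk))
        ext x
        constructor
        · rintro ⟨⟨hxA, _⟩, hxk⟩; exact ⟨hxA, hxk⟩
        · rintro ⟨hxA, hxk⟩
          exact ⟨⟨hxA, fun hxa => hd.ne_of_mem hxa hxk rfl⟩, hxk⟩
      rw [Finset.sum_insert ha, h1, h3,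
        Finset.sum_congr rfl (fun k hk => by rw [h4 k hk])]

/-- The restriction of a finite product measure to a box is the product of restrictions. -/
lemma aux_pi_restrict (k : ℕ) (μ : Measure α) [IsFiniteMeasure μ] {L : Set α}
    (hL : MeasurableSet L) :
    (Measure.pi fun _ : Fin k => μ).restrict (Set.univ.pi fun _ => L)
      = Measure.pi (fun _ : Fin k => μ.restrict L) := by
  haveI : IsFiniteMeasure (μ.restrict L) :=
    ⟨by rw [Measure.restrict_apply MeasurableSet.univ]; exact measure_lt_top μ _⟩
  refine (Measure.pi_eq (μ := fun _ : Fin k => μ.restrict L) fun s hs => ?_).symm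
  rw [Measure.restrict_apply (MeasurableSet.univ_pi hs), ← Set.pi_inter_distrib,
    Measure.pi_pi (fun _ : Fin k => μ)]
  simp_rw [Measure.restrict_apply (hs _)]

/-- For an injection `ι` with measurable retraction, the product of pushforward measures
evaluated at an arbitrary set inside the range box equals the product measure of the
preimage. -/
lemma aux_pi_map_apply {T : Type*} [MeasurableSpace T] (μ : Measure T) [IsFiniteMeasure μ]
    {ι : T → α} (hι : Measurable ι)
    (hret : Nonempty T → ∃ r : α → T, Measurable r ∧ ∀ t, r (ι t) = t)
    (k : ℕ) (A : Set (Fin k → α)) (hA : A ⊆ Set.univ.pi fun _ => Set.range ι) :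
    (Measure.pi fun _ : Fin k => μ.map ι) A
      = (Measure.pi fun _ : Fin k => μ) ((fun g => ι ∘ g) ⁻¹' A) := by
  haveI : IsFiniteMeasure (μ.map ι) := by
    constructor
    rw [Measure.map_apply hι MeasurableSet.univ]
    exact measure_lt_top μ _
  rcases isEmpty_or_nonempty T with hT | hT
  · rcases Nat.eq_zero_or_pos k with rfl | hk
    · haveI : Subsingleton (Fin 0 → α) := ⟨fun f g => funext fun i => i.elim0⟩
      rcases Set.eq_empty_or_nonempty A with rfl | hA'
      · simp
      · have hAu : A = Set.univ := by
          ext x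
          obtain ⟨y, hy⟩ := hA'
          simp [Subsingleton.elim x y, hy]
        subst hAu
        simp only [Set.preimage_univ]
        rw [Measure.pi_univ, Measure.pi_univ]
        simp
    · have hrange : Set.range ι = ∅ := by
        rw [Set.range_eq_empty_iff]; exact hT
      have hAe : A = ∅ := by
        have : (Set.univ.pi fun _ : Fin k => Set.range ι) = ∅ :=
          Set.univ_pi_eq_empty (i := ⟨0, hk⟩) hrange
        exact Set.subset_empty_iff.1 (this ▸ hA)
      subst hAe
      simp
  · obtain ⟨r, hr, hrι⟩ := hret hT
    have hmp : MeasurePreserving (fun g : Fin k → T => ι ∘ g)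
        (Measure.pi fun _ : Fin k => μ) (Measure.pi fun _ : Fin k => μ.map ι) :=
      measurePreserving_pi _ _ (fun _ => ⟨hι, rfl⟩)
    have hRmeas : Measurable (fun f : Fin k → α => r ∘ f) :=
      measurable_pi_lambda _ fun i => hr.comp (measurable_pi_apply i)
    refine le_antisymm ?_ ?_
    · set B := toMeasurable (Measure.pi fun _ : Fin k => μ) ((fun g => ι ∘ g) ⁻¹' A) with hB
      have hBmeas : MeasurableSet B := measurableSet_toMeasurable _ _
      have hsub : A ⊆ (fun f => r ∘ f) ⁻¹' B := by
        intro f hf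
        have hfeq : ι ∘ (r ∘ f) = f := by
          funext i
          obtain ⟨t, ht⟩ := hA hf i (Set.mem_univ i)
          simp only [Function.comp_apply, ← ht, hrι]
        have : r ∘ f ∈ (fun g => ι ∘ g) ⁻¹' A := by
          simp only [Set.mem_preimage, hfeq]; exact hf
        exact subset_toMeasurable _ _ this
      calc (Measure.pi fun _ : Fin k => μ.map ι) A
          ≤ (Measure.pi fun _ : Fin k => μ.map ι) ((fun f => r ∘ f) ⁻¹' B) :=
            measure_mono hsub
        _ = (Measure.pi fun _ : Fin k => μ)
              ((fun g : Fin k → T => ι ∘ g) ⁻¹' ((fun f => r ∘ f) ⁻¹' B)) := by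
            rw [← hmp.map_eq, Measure.map_apply hmp.measurable (hRmeas hBmeas)]
        _ = (Measure.pi fun _ : Fin k => μ) B := by
            congr 1
            ext g
            have : r ∘ (ι ∘ g) = g := by funext i; simp [hrι]
            simp [Set.mem_preimage, this]
        _ = (Measure.pi fun _ : Fin k => μ) ((fun g => ι ∘ g) ⁻¹' A) :=
            measure_toMeasurable _
    · rw [← hmp.map_eq]
      exact Measure.le_map_apply hmp.measurable.aemeasurable A

end Aux

/-- The key computation: the measure of strictly monotone tuples in the ordinal sum with
exactly the first `k` coordinates in `T₁` is the product of the two run coefficients. -/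
lemma aux_key {T₁ T₂ : Type*} [MeasurableSpace T₁] [MeasurableSpace T₂]
    [PartialOrder T₁] [PartialOrder T₂]
    (μ₁ : Measure T₁) (μ₂ : Measure T₂) [IsFiniteMeasure μ₁] [IsFiniteMeasure μ₂]
    (n k m : ℕ) (hkm : k + m = n) :
    (Measure.pi fun _ : Fin n =>
        (μ₁.map (toLex ∘ Sum.inl) + μ₂.map (toLex ∘ Sum.inr) : Measure (T₁ ⊕ₗ T₂)))
      ({f : Fin n → T₁ ⊕ₗ T₂ | StrictMono f} ∩
        {f : Fin n → T₁ ⊕ₗ T₂ | ∀ i : Fin n,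
          f i ∈ Set.range (toLex ∘ Sum.inl : T₁ → T₁ ⊕ₗ T₂) ↔ (i : ℕ) < k})
      = runCoeff μ₁ k * runCoeff μ₂ m := by
  subst hkm
  set ι₁ : T₁ → T₁ ⊕ₗ T₂ := toLex ∘ Sum.inl with hι₁def
  set ι₂ : T₂ → T₁ ⊕ₗ T₂ := toLex ∘ Sum.inr with hι₂def
  set μ : Measure (T₁ ⊕ₗ T₂) := μ₁.map ι₁ + μ₂.map ι₂ with hμdef
  have hmι₁ : Measurable ι₁ := measurable_inl
  have hmι₂ : Measurable ι₂ := measurable_inr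
  have hL₁ : MeasurableSet (Set.range ι₁) := measurableSet_range_inl
  have hL₂ : MeasurableSet (Set.range ι₂) := measurableSet_range_inr
  haveI : IsFiniteMeasure (μ₁.map ι₁) :=
    ⟨by rw [Measure.map_apply hmι₁ MeasurableSet.univ]; exact measure_lt_top μ₁ _⟩
  haveI : IsFiniteMeasure (μ₂.map ι₂) :=
    ⟨by rw [Measure.map_apply hmι₂ MeasurableSet.univ]; exact measure_lt_top μ₂ _⟩
  haveI : IsFiniteMeasure μ := by rw [hμdef]; infer_instance
  -- order facts
  have hlt₁ : ∀ a b : T₁, ι₁ a < ι₁ b ↔ a < b := fun a b => Sum.Lex.inl_lt_inl_iff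
  have hlt₂ : ∀ a b : T₂, ι₂ a < ι₂ b ↔ a < b := fun a b => Sum.Lex.inr_lt_inr_iff
  have hlt₁₂ : ∀ (a : T₁) (b : T₂), ι₁ a < ι₂ b := fun a b => Sum.Lex.inl_lt_inr a b
  have hcover : ∀ x : T₁ ⊕ₗ T₂, x ∉ Set.range ι₁ → x ∈ Set.range ι₂ := by
    intro x hx
    rcases hx' : ofLex x with a | b
    · exact absurd ⟨a, show toLex (Sum.inl a) = x by rw [← hx', toLex_ofLex]⟩ hx
    · exact ⟨b, show toLex (Sum.inr b) = x by rw [← hx', toLex_ofLex]⟩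
  have hdisj : ∀ x : T₁ ⊕ₗ T₂, x ∈ Set.range ι₂ → x ∉ Set.range ι₁ := by
    rintro x hx ⟨a, rfl⟩
    obtain ⟨b, hb⟩ := hx
    exact Sum.inr_ne_inl (toLex.injective (show toLex (Sum.inr b) = toLex (Sum.inl a) from hb))
  have hretr₁ : Nonempty T₁ → ∃ r : (T₁ ⊕ₗ T₂) → T₁, Measurable r ∧ ∀ t, r (ι₁ t) = t := by
    intro hne
    exact ⟨(Sum.elim id (fun _ => Classical.arbitrary T₁)) ∘ ofLex,
      Measurable.sumElim measurable_id measurable_const, fun t => rfl⟩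
  have hretr₂ : Nonempty T₂ → ∃ r : (T₁ ⊕ₗ T₂) → T₂, Measurable r ∧ ∀ t, r (ι₂ t) = t := by
    intro hne
    exact ⟨(Sum.elim (fun _ => Classical.arbitrary T₂) id) ∘ ofLex,
      Measurable.sumElim measurable_const measurable_id, fun t => rfl⟩
  set A : Set (Fin k → T₁ ⊕ₗ T₂) := {g | StrictMono g ∧ ∀ i, g i ∈ Set.range ι₁} with hAdef
  set B : Set (Fin m → T₁ ⊕ₗ T₂) := {h | StrictMono h ∧ ∀ j, h j ∈ Set.range ι₂} with hBdef
  set σ : Fin k ⊕ Fin m ≃ Fin (k + m) := finSumFinEquiv with hσdef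
  set E : ((Fin k → T₁ ⊕ₗ T₂) × (Fin m → T₁ ⊕ₗ T₂)) ≃ᵐ (Fin (k + m) → T₁ ⊕ₗ T₂) :=
    (MeasurableEquiv.sumPiEquivProdPi (fun _ : Fin k ⊕ Fin m => T₁ ⊕ₗ T₂)).symm.trans
      (MeasurableEquiv.piCongrLeft (fun _ : Fin (k + m) => T₁ ⊕ₗ T₂) σ) with hEdef
  have hE : MeasurePreserving E
      ((Measure.pi fun _ : Fin k => μ).prod (Measure.pi fun _ : Fin m => μ))
      (Measure.pi fun _ : Fin (k + m) => μ) :=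
    (measurePreserving_piCongrLeft (fun _ : Fin (k + m) => μ) σ).comp
      (measurePreserving_sumPiEquivProdPi_symm (fun _ : Fin k ⊕ Fin m => μ))
  have hσl : ∀ i : Fin k, ((σ (Sum.inl i) : Fin (k + m)) : ℕ) = (i : ℕ) := by
    intro i; simp [hσdef]
  have hσr : ∀ j : Fin m, ((σ (Sum.inr j) : Fin (k + m)) : ℕ) = k + (j : ℕ) := by
    intro j; simp [hσdef]
  have hEapp : ∀ (g : Fin k → T₁ ⊕ₗ T₂) (h : Fin m → T₁ ⊕ₗ T₂) (s : Fin k ⊕ Fin m),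
      E (g, h) (σ s) = Sum.elim g h s := by
    intro g h s
    show (MeasurableEquiv.piCongrLeft (fun _ : Fin (k + m) => T₁ ⊕ₗ T₂) σ)
        ((MeasurableEquiv.sumPiEquivProdPi (fun _ : Fin k ⊕ Fin m => T₁ ⊕ₗ T₂)).symm (g, h))
        (σ s) = Sum.elim g h s
    rw [MeasurableEquiv.piCongrLeft_apply_apply]
    cases s <;> rfl
  have hsurj : ∀ i : Fin (k + m), ∃ s : Fin k ⊕ Fin m, σ s = i :=
    fun i => ⟨σ.symm i, σ.apply_symm_apply i⟩
  have hpre : ⇑E ⁻¹' ({f : Fin (k + m) → T₁ ⊕ₗ T₂ | StrictMono f} ∩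
      {f : Fin (k + m) → T₁ ⊕ₗ T₂ | ∀ i : Fin (k + m),
        f i ∈ Set.range ι₁ ↔ (i : ℕ) < k}) = A ×ˢ B := by
    ext ⟨g, h⟩
    simp only [Set.mem_preimage, Set.mem_inter_iff, Set.mem_setOf_eq, Set.mem_prod,
      hAdef, hBdef]
    constructor
    · rintro ⟨hmono, hiff⟩
      refine ⟨⟨?_, ?_⟩, ?_, ?_⟩
      · intro i i' hii'
        have hlt : σ (Sum.inl i) < σ (Sum.inl i') := by
          rw [Fin.lt_def, hσl, hσl]; exact hii'
        have := hmono hlt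
        rwa [hEapp, hEapp] at this
      · intro i
        have := (hiff (σ (Sum.inl i))).2 (by rw [hσl]; exact i.isLt)
        rwa [hEapp] at this
      · intro j j' hjj'
        have hlt : σ (Sum.inr j) < σ (Sum.inr j') := by
          rw [Fin.lt_def, hσr, hσr]; exact Nat.add_lt_add_left hjj' k
        have := hmono hlt
        rwa [hEapp, hEapp] at this
      · intro j
        refine hcover _ (fun hmem => ?_)
        have := (hiff (σ (Sum.inr j))).1 (by rwa [hEapp])
        rw [hσr] at this
        omega
    · rintro ⟨⟨hg, hg1⟩, hh, hh2⟩
      constructor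
      · intro i i' hii'
        obtain ⟨s, rfl⟩ := hsurj i
        obtain ⟨s', rfl⟩ := hsurj i'
        rw [Fin.lt_def] at hii'
        cases s with
        | inl a =>
          cases s' with
          | inl a' =>
            rw [hσl, hσl] at hii'
            rw [hEapp, hEapp]
            exact hg (Fin.lt_def.mpr hii')
          | inr b' =>
            rw [hEapp, hEapp]
            obtain ⟨x, hx⟩ := hg1 a
            obtain ⟨y, hy⟩ := hh2 b'
            rw [show Sum.elim g h (Sum.inl a) = g a from rfl,
              show Sum.elim g h (Sum.inr b') = h b' from rfl, ← hx, ← hy]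
            exact hlt₁₂ x y
        | inr b =>
          cases s' with
          | inl a' =>
            rw [hσr, hσl] at hii'
            have := a'.isLt
            omega
          | inr b' =>
            rw [hσr, hσr] at hii'
            rw [hEapp, hEapp]
            exact hh (Fin.lt_def.mpr (by omega))
      · intro i
        obtain ⟨s, rfl⟩ := hsurj i
        cases s with
        | inl a =>
          rw [hEapp, hσl]
          exact iff_of_true (hg1 a) a.isLt
        | inr b =>
          rw [hEapp, hσr]
          exact iff_of_false (hdisj _ (hh2 b)) (by omega)
  have h1 : (Measure.pi fun _ : Fin (k + m) => μ)
      ({f : Fin (k + m) → T₁ ⊕ₗ T₂ | StrictMono f} ∩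
        {f : Fin (k + m) → T₁ ⊕ₗ T₂ | ∀ i : Fin (k + m),
          f i ∈ Set.range ι₁ ↔ (i : ℕ) < k})
      = ((Measure.pi fun _ : Fin k => μ).prod (Measure.pi fun _ : Fin m => μ)) (A ×ˢ B) := by
    rw [← hpre, ← hE.map_eq, MeasurableEquiv.map_apply]
  rw [h1, Measure.prod_prod]
  have hAside : (Measure.pi fun _ : Fin k => μ) A = runCoeff μ₁ k := by
    have hAsub : A ⊆ Set.univ.pi fun _ : Fin k => Set.range ι₁ := fun g hg i _ => hg.2 i
    have e1 : (Measure.pi fun _ : Fin k => μ) A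
        = (Measure.pi fun _ : Fin k => μ.restrict (Set.range ι₁)) A := by
      rw [← aux_pi_restrict k μ hL₁,
        Measure.restrict_apply' (MeasurableSet.univ_pi fun _ => hL₁),
        Set.inter_eq_self_of_subset_left hAsub]
    have hres : μ.restrict (Set.range ι₁) = μ₁.map ι₁ := by
      refine Measure.ext fun s hs => ?_
      rw [Measure.restrict_apply hs, hμdef, Measure.add_apply,
        Measure.map_apply hmι₁ (hs.inter hL₁), Measure.map_apply hmι₂ (hs.inter hL₁),
        Measure.map_apply hmι₁ hs]
      have hp1 : ι₁ ⁻¹' (s ∩ Set.range ι₁) = ι₁ ⁻¹' s := by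
        ext t
        simp only [Set.mem_preimage, Set.mem_inter_iff, Set.mem_range, and_iff_left_iff_imp]
        exact fun _ => ⟨t, rfl⟩
      have hp2 : ι₂ ⁻¹' (s ∩ Set.range ι₁) = ∅ := by
        ext t
        simp only [Set.mem_preimage, Set.mem_inter_iff, Set.mem_empty_iff_false, iff_false,
          not_and]
        exact fun _ => hdisj (ι₂ t) ⟨t, rfl⟩
      rw [hp1, hp2]
      simp
    rw [e1, hres, aux_pi_map_apply μ₁ hmι₁ hretr₁ k A hAsub]
    unfold runCoeff
    congr 1
    ext g
    simp only [Set.mem_preimage, hAdef, Set.mem_setOf_eq, Function.comp_apply]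
    constructor
    · rintro ⟨hmono, -⟩ i j hij
      have := hmono hij
      rwa [Function.comp_apply, Function.comp_apply, hlt₁] at this
    · intro hgmono
      exact ⟨fun i j hij => (hlt₁ _ _).2 (hgmono hij), fun i => ⟨g i, rfl⟩⟩
  have hBside : (Measure.pi fun _ : Fin m => μ) B = runCoeff μ₂ m := by
    have hBsub : B ⊆ Set.univ.pi fun _ : Fin m => Set.range ι₂ := fun h hh j _ => hh.2 j
    have e1 : (Measure.pi fun _ : Fin m => μ) B
        = (Measure.pi fun _ : Fin m => μ.restrict (Set.range ι₂)) B := by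
      rw [← aux_pi_restrict m μ hL₂,
        Measure.restrict_apply' (MeasurableSet.univ_pi fun _ => hL₂),
        Set.inter_eq_self_of_subset_left hBsub]
    have hres : μ.restrict (Set.range ι₂) = μ₂.map ι₂ := by
      refine Measure.ext fun s hs => ?_
      rw [Measure.restrict_apply hs, hμdef, Measure.add_apply,
        Measure.map_apply hmι₁ (hs.inter hL₂), Measure.map_apply hmι₂ (hs.inter hL₂),
        Measure.map_apply hmι₂ hs]
      have hp1 : ι₂ ⁻¹' (s ∩ Set.range ι₂) = ι₂ ⁻¹' s := by
        ext t
        simp only [Set.mem_preimage, Set.mem_inter_iff, Set.mem_range, and_iff_left_iff_imp]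
        exact fun _ => ⟨t, rfl⟩
      have hp2 : ι₁ ⁻¹' (s ∩ Set.range ι₂) = ∅ := by
        ext t
        simp only [Set.mem_preimage, Set.mem_inter_iff, Set.mem_empty_iff_false, iff_false,
          not_and]
        exact fun _ hrng => hdisj (ι₁ t) hrng ⟨t, rfl⟩
      rw [hp1, hp2]
      simp
    rw [e1, hres, aux_pi_map_apply μ₂ hmι₂ hretr₂ m B hBsub]
    unfold runCoeff
    congr 1
    ext h
    simp only [Set.mem_preimage, hBdef, Set.mem_setOf_eq, Function.comp_apply]
    constructor
    · rintro ⟨hmono, -⟩ i j hij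
      have := hmono hij
      rwa [Function.comp_apply, Function.comp_apply, hlt₂] at this
    · intro hhmono
      exact ⟨fun i j hij => (hlt₂ _ _).2 (hhmono hij), fun j => ⟨h j, rfl⟩⟩
  rw [hAside, hBside]

/-- for the ordinal (series) sum T₁ ⊗ T₂ (here `T₁ ⊕ₗ T₂`), equipped with the
measure agreeing with μ₁ on T₁ and μ₂ on T₂, the strict run coefficients satisfy
Lₙ(μ₁ ⊗ μ₂) = Σ_{k=0}^{n} Lₖ(μ₁)·L_{n−k}(μ₂), i.e. the generating series multiply. -/
theorem stmt16 {T₁ T₂ : Type*} [MeasurableSpace T₁] [MeasurableSpace T₂]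
    [PartialOrder T₁] [PartialOrder T₂]
    (μ₁ : Measure T₁) (μ₂ : Measure T₂) [IsFiniteMeasure μ₁] [IsFiniteMeasure μ₂] (n : ℕ) :
    runCoeff ((μ₁.map (toLex ∘ Sum.inl) + μ₂.map (toLex ∘ Sum.inr) : Measure (T₁ ⊕ₗ T₂))) n
      = ∑ k ∈ Finset.range (n + 1), runCoeff μ₁ k * runCoeff μ₂ (n - k) := by
  classical
  set C : ℕ → Set (Fin n → T₁ ⊕ₗ T₂) := fun k =>
    {f | ∀ i : Fin n, f i ∈ Set.range (toLex ∘ Sum.inl : T₁ → T₁ ⊕ₗ T₂) ↔ (i : ℕ) < k}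
    with hCsetdef
  have hL₁ : MeasurableSet (Set.range (toLex ∘ Sum.inl : T₁ → T₁ ⊕ₗ T₂)) :=
    measurableSet_range_inl
  have hCmeas : ∀ k, MeasurableSet (C k) := by
    intro k
    have hrw : C k = ⋂ i : Fin n, {f : Fin n → T₁ ⊕ₗ T₂ |
        f i ∈ Set.range (toLex ∘ Sum.inl : T₁ → T₁ ⊕ₗ T₂) ↔ (i : ℕ) < k} := by
      ext f; simp [hCsetdef, Set.mem_iInter]
    rw [hrw]
    refine MeasurableSet.iInter fun i => ?_
    by_cases h : (i : ℕ) < k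
    · have : {f : Fin n → T₁ ⊕ₗ T₂ |
          f i ∈ Set.range (toLex ∘ Sum.inl : T₁ → T₁ ⊕ₗ T₂) ↔ (i : ℕ) < k}
          = (fun f : Fin n → T₁ ⊕ₗ T₂ => f i) ⁻¹'
              Set.range (toLex ∘ Sum.inl : T₁ → T₁ ⊕ₗ T₂) := by
        ext f; simp [h]
      rw [this]
      exact (measurable_pi_apply i) hL₁
    · have : {f : Fin n → T₁ ⊕ₗ T₂ |
          f i ∈ Set.range (toLex ∘ Sum.inl : T₁ → T₁ ⊕ₗ T₂) ↔ (i : ℕ) < k}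
          = ((fun f : Fin n → T₁ ⊕ₗ T₂ => f i) ⁻¹'
              Set.range (toLex ∘ Sum.inl : T₁ → T₁ ⊕ₗ T₂))ᶜ := by
        ext f; simp [h]
      rw [this]
      exact ((measurable_pi_apply i) hL₁).compl
  have hkey : ∀ k l : ℕ, k < l → l ≤ n → Disjoint (C k) (C l) := by
    intro k l hkl hl
    rw [Set.disjoint_left]
    intro f hfk hfl
    have hkn : k < n := lt_of_lt_of_le hkl hl
    have h1 := hfk ⟨k, hkn⟩
    have h2 := hfl ⟨k, hkn⟩
    simp only at h1 h2
    rw [h2] at h1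
    omega
  have hCdisj : ∀ k ∈ Finset.range (n + 1), ∀ l ∈ Finset.range (n + 1), k ≠ l →
      Disjoint (C k) (C l) := by
    intro k hk l hl hkl
    rcases lt_or_gt_of_ne hkl with h | h
    · exact hkey k l h (Nat.lt_succ_iff.1 (Finset.mem_range.1 hl))
    · exact (hkey l k h (Nat.lt_succ_iff.1 (Finset.mem_range.1 hk))).symm
  have hcov : {f : Fin n → T₁ ⊕ₗ T₂ | StrictMono f} ⊆ ⋃ k ∈ Finset.range (n + 1), C k := by
    intro f hf
    have hdown : ∀ i j : Fin n, i ≤ j →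
        f j ∈ Set.range (toLex ∘ Sum.inl : T₁ → T₁ ⊕ₗ T₂) →
        f i ∈ Set.range (toLex ∘ Sum.inl : T₁ → T₁ ⊕ₗ T₂) := by
      intro i j hij hj
      rcases eq_or_lt_of_le hij with rfl | hlt
      · exact hj
      · obtain ⟨a, ha⟩ := hj
        have hfi : f i < (toLex ∘ Sum.inl : T₁ → T₁ ⊕ₗ T₂) a := ha ▸ hf hlt
        by_contra hno
        rcases hx' : ofLex (f i) with c | d
        · exact hno ⟨c, show toLex (Sum.inl c) = f i by rw [← hx', toLex_ofLex]⟩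
        · have heq : f i = toLex (Sum.inr d) := by rw [← hx', toLex_ofLex]
          rw [heq] at hfi
          exact Sum.Lex.not_inr_lt_inl hfi
    set P : Finset (Fin n) := Finset.univ.filter
      (fun i => f i ∈ Set.range (toLex ∘ Sum.inl : T₁ → T₁ ⊕ₗ T₂)) with hPdef
    have hPn : P.card ≤ n := le_trans (Finset.card_le_univ P) (by simp)
    have hmem : f ∈ C P.card := by
      intro i
      constructor
      · intro hi
        have hsub : Finset.Iic i ⊆ P := by
          intro j hj
          rw [Finset.mem_Iic] at hj
          rw [hPdef, Finset.mem_filter]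
          exact ⟨Finset.mem_univ j, hdown j i hj hi⟩
        have := Finset.card_le_card hsub
        rw [Fin.card_Iic] at this
        omega
      · intro hi
        by_contra hno
        have hsub : P ⊆ Finset.Iio i := by
          intro j hj
          rw [Finset.mem_Iio]
          by_contra hji
          push_neg at hji
          rw [hPdef, Finset.mem_filter] at hj
          exact hno (hdown i j hji hj.2)
        have := Finset.card_le_card hsub
        rw [Fin.card_Iio] at this
        omega
    simp only [Set.mem_iUnion, Finset.mem_range, exists_prop]
    exact ⟨P.card, Nat.lt_succ_of_le hPn, hmem⟩
  have hmain := aux_measure_eq_sum_of_subset_biUnion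
    (Measure.pi fun _ : Fin n =>
      (μ₁.map (toLex ∘ Sum.inl) + μ₂.map (toLex ∘ Sum.inr) : Measure (T₁ ⊕ₗ T₂)))
    (Finset.range (n + 1)) hCmeas hCdisj hcov
  unfold runCoeff at *
  rw [hmain]
  refine Finset.sum_congr rfl fun k hk => ?_
  have hkn : k ≤ n := Nat.lt_succ_iff.1 (Finset.mem_range.1 hk)
  have := aux_key μ₁ μ₂ n k (n - k) (by omega)
  unfold runCoeff at this
  exact this
end

section
/- Let μ₁, μ₂ be finite measures on a partial order T with measurable order, and define Lₙ(μ) = μⁿ({a₁ < ... < aₙ}). Then for every n ≥ 1, |Lₙ(μ₁) − Lₙ(μ₂)| ≤ ‖μ₁ − μ₂‖ · Σ_{k=0}^{n−1} Lₖ(μ₁)·L_{n−k−1}(μ₂), where ‖·‖ is the total variation norm. -/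
open MeasureTheory

namespace Stmt18Aux

variable {T : Type*} [MeasurableSpace T] [PartialOrder T]

/-- The set of strictly monotone tuples, optionally constrained to lie below `z` when
`o = some z`. -/
def runSet (n : ℕ) (o : Option T) : Set (Fin n → T) :=
  {f | StrictMono f ∧ ∀ i, ∀ z ∈ o, f i < z}

/-- The "upper cut" set of points below the optional bound. -/
def upperCut (o : Option T) : Set T := {y | ∀ z ∈ o, y < z}

lemma runSet_none (n : ℕ) : runSet (T := T) n none = {f | StrictMono f} := by
  ext f; simp [runSet]

lemma mem_runSet_some {n : ℕ} {g : Fin n → T} {y : T} :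
    g ∈ runSet n (some y) ↔ StrictMono g ∧ ∀ i, g i < y := by
  constructor
  · rintro ⟨h1, h2⟩
    exact ⟨h1, fun i => h2 i y rfl⟩
  · rintro ⟨h1, h2⟩
    refine ⟨h1, fun i z hz => ?_⟩
    cases hz
    exact h2 i

lemma runSet_zero (o : Option T) : runSet (T := T) 0 o = Set.univ :=
  Set.eq_univ_of_forall fun f => ⟨fun a => a.elim0, fun i => i.elim0⟩

lemma runSet_subset_strictMono (n : ℕ) (o : Option T) :
    runSet (T := T) n o ⊆ {f | StrictMono f} := fun _ hf => hf.1

section Measurability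

variable (hord : MeasurableSet {p : T × T | p.1 < p.2})
include hord

lemma measurableSet_lt_right (z : T) : MeasurableSet {t : T | t < z} := by
  have h : {t : T | t < z} = (fun t => (t, z)) ⁻¹' {p : T × T | p.1 < p.2} := rfl
  rw [h]
  exact hord.preimage (measurable_id.prodMk measurable_const)

lemma measurableSet_strictMono (n : ℕ) :
    MeasurableSet {f : Fin n → T | StrictMono f} := by
  have h : {f : Fin n → T | StrictMono f}
      = ⋂ (i : Fin n), ⋂ (j : Fin n), ⋂ (_ : i < j), {f : Fin n → T | f i < f j} := by
    ext f
    simp only [Set.mem_setOf_eq, Set.mem_iInter]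
    exact ⟨fun h i j hij => h hij, fun h a b hab => h a b hab⟩
  rw [h]
  refine MeasurableSet.iInter fun i => MeasurableSet.iInter fun j =>
    MeasurableSet.iInter fun _ => ?_
  have h2 : {f : Fin n → T | f i < f j}
      = (fun f : Fin n → T => (f i, f j)) ⁻¹' {p : T × T | p.1 < p.2} := rfl
  rw [h2]
  exact hord.preimage ((measurable_pi_apply i).prodMk (measurable_pi_apply j))

lemma measurableSet_runSet (n : ℕ) (o : Option T) : MeasurableSet (runSet n o) := by
  cases o with
  | none => rw [runSet_none]; exact measurableSet_strictMono hord n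
  | some z =>
      have h : runSet (T := T) n (some z)
          = {f : Fin n → T | StrictMono f} ∩ ⋂ (i : Fin n),
              (fun f : Fin n → T => f i) ⁻¹' {t : T | t < z} := by
        ext f
        simp only [Set.mem_inter_iff, Set.mem_iInter, Set.mem_preimage, Set.mem_setOf_eq]
        exact mem_runSet_some
      rw [h]
      exact (measurableSet_strictMono hord n).inter <| MeasurableSet.iInter fun i =>
        (measurableSet_lt_right hord z).preimage (measurable_pi_apply i)

lemma measurableSet_upperCut (o : Option T) : MeasurableSet (upperCut o) := by
  cases o with
  | none =>
      have : upperCut (T := T) none = Set.univ := by ext y; simp [upperCut]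
      rw [this]; exact MeasurableSet.univ
  | some z =>
      have : upperCut (some z) = {t : T | t < z} := by
        ext y
        constructor
        · intro h; exact h z rfl
        · intro h w hw; cases hw; exact h
      rw [this]; exact measurableSet_lt_right hord z

end Measurability

lemma strictMono_snoc_iff {n : ℕ} {g : Fin n → T} {y : T} :
    StrictMono (Fin.snoc g y : Fin (n + 1) → T) ↔ StrictMono g ∧ ∀ i, g i < y := by
  constructor
  · intro h
    refine ⟨fun i j hij => ?_, fun i => ?_⟩
    · have := h (show (i.castSucc : Fin (n + 1)) < j.castSucc by
        simpa [Fin.castSucc_lt_castSucc_iff] using hij)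
      simpa using this
    · have := h (Fin.castSucc_lt_last i)
      simpa using this
  · rintro ⟨h1, h2⟩ i j hij
    rcases Fin.exists_castSucc_eq.mpr (Fin.ne_last_of_lt hij) with ⟨i', rfl⟩
    rcases eq_or_ne j (Fin.last n) with rfl | hj
    · simpa using h2 i'
    · rcases Fin.exists_castSucc_eq.mpr hj with ⟨j', rfl⟩
      simp only [Fin.snoc_castSucc]
      exact h1 (by simpa [Fin.castSucc_lt_castSucc_iff] using hij)

lemma snoc_mem_runSet_iff {n : ℕ} {o : Option T} {g : Fin n → T} {y : T} :
    (Fin.snoc g y : Fin (n + 1) → T) ∈ runSet (n + 1) o ↔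
      y ∈ upperCut o ∧ g ∈ runSet n (some y) := by
  constructor
  · rintro ⟨hsm, hc⟩
    rw [strictMono_snoc_iff] at hsm
    refine ⟨fun z hz => ?_, mem_runSet_some.mpr ⟨hsm.1, hsm.2⟩⟩
    have := hc (Fin.last n) z hz
    simpa using this
  · rintro ⟨hy, hg⟩
    rw [mem_runSet_some] at hg
    refine ⟨strictMono_snoc_iff.mpr ⟨hg.1, hg.2⟩, fun j z hz => ?_⟩
    refine Fin.lastCases ?_ (fun i => ?_) j
    · simpa using hy z hz
    · simp only [Fin.snoc_castSucc]
      exact lt_trans (hg.2 i) (hy z hz)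

variable (hord : MeasurableSet {p : T × T | p.1 < p.2})
include hord

/-- Peeling off the last coordinate of the strict-run set. -/
lemma pi_succ_apply (μ : Measure T) [IsFiniteMeasure μ] (n : ℕ) (o : Option T) :
    (Measure.pi fun _ : Fin (n + 1) => μ) (runSet (n + 1) o)
      = ∫⁻ y, (upperCut o).indicator
          (fun y => (Measure.pi fun _ : Fin n => μ) (runSet n (some y))) y ∂μ := by
  classical
  set e := MeasurableEquiv.piFinSuccAbove (fun _ : Fin (n + 1) => T) (Fin.last n) with he
  have hmp := measurePreserving_piFinSuccAbove (fun _ : Fin (n + 1) => μ) (Fin.last n)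
  set B : Set (T × (Fin n → T)) := e.symm ⁻¹' (runSet (n + 1) o) with hBdef
  have hB : MeasurableSet B :=
    (measurableSet_runSet hord (n + 1) o).preimage e.symm.measurable
  have h1 : runSet (n + 1) o = e ⁻¹' B := by
    ext f
    simp [hBdef]
  rw [h1, hmp.measure_preimage_equiv, Measure.prod_apply hB]
  refine lintegral_congr fun y => ?_
  have hy : (Prod.mk y ⁻¹' B) = {g : Fin n → T | e.symm (y, g) ∈ runSet (n + 1) o} := rfl
  have hsymm : ∀ g : Fin n → T, e.symm (y, g) = Fin.snoc g y := by
    intro g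
    show (Fin.insertNthEquiv (fun _ : Fin (n + 1) => T) (Fin.last n)) (y, g) = Fin.snoc g y
    simp [Fin.insertNthEquiv, Fin.insertNth_last']
  by_cases hmem : y ∈ upperCut o
  · rw [Set.indicator_of_mem hmem]
    congr 1
    rw [hy]
    ext g
    simp only [Set.mem_setOf_eq, hsymm g, snoc_mem_runSet_iff]
    exact ⟨fun h => h.2, fun h => ⟨hmem, h⟩⟩
  · rw [Set.indicator_of_notMem hmem]
    have : (Prod.mk y ⁻¹' B) = (∅ : Set (Fin n → T)) := by
      rw [hy]
      ext g
      simp only [Set.mem_setOf_eq, hsymm g, snoc_mem_runSet_iff, Set.mem_empty_iff_false,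
        iff_false]
      rintro ⟨h, -⟩
      exact hmem h
    rw [this]
    simp

/-- Measurability of the section function. -/
lemma measurable_section (μ : Measure T) [IsFiniteMeasure μ] (n : ℕ) :
    Measurable fun y => (Measure.pi fun _ : Fin n => μ) (runSet n (some y)) := by
  have hB : MeasurableSet {p : T × (Fin n → T) | p.2 ∈ runSet n (some p.1)} := by
    have h : {p : T × (Fin n → T) | p.2 ∈ runSet n (some p.1)}
        = (Prod.snd ⁻¹' {f : Fin n → T | StrictMono f}) ∩
          ⋂ (i : Fin n), (fun p : T × (Fin n → T) => (p.2 i, p.1)) ⁻¹'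
            {q : T × T | q.1 < q.2} := by
      ext p
      simp only [Set.mem_inter_iff, Set.mem_preimage, Set.mem_iInter, Set.mem_setOf_eq]
      exact mem_runSet_some
    rw [h]
    exact ((measurableSet_strictMono hord n).preimage measurable_snd).inter <|
      MeasurableSet.iInter fun i => hord.preimage
        (((measurable_pi_apply i).comp measurable_snd).prodMk measurable_fst)
  have := measurable_measure_prodMk_left
    (ν := Measure.pi fun _ : Fin n => μ) hB
  exact this

lemma key (μ ν p q : Measure T) [IsFiniteMeasure μ] [IsFiniteMeasure ν]
    [IsFiniteMeasure p] [IsFiniteMeasure q] (h : μ + q = ν + p) :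
    ∀ n : ℕ, ∀ o : Option T,
      (Measure.pi fun _ : Fin n => μ) (runSet n o)
        ≤ (Measure.pi fun _ : Fin n => ν) (runSet n o)
          + p Set.univ * ∑ k ∈ Finset.range n,
              runCoeff μ (n - 1 - k) *
                (Measure.pi fun _ : Fin k => ν) (runSet k o) := by
  intro n
  induction n with
  | zero =>
      intro o
      simp [runSet_zero]
  | succ n ih =>
      intro o
      set O := upperCut (T := T) o with hOdef
      have hOm : MeasurableSet O := measurableSet_upperCut hord o
      set Fμ := fun y => (Measure.pi fun _ : Fin n => μ) (runSet n (some y)) with hFμdef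
      set Fν := fun y => (Measure.pi fun _ : Fin n => ν) (runSet n (some y)) with hFνdef
      have hFνm : Measurable Fν := measurable_section hord ν n
      have hint : ∀ f : T → ENNReal,
          (∫⁻ y, f y ∂μ) ≤ (∫⁻ y, f y ∂ν) + ∫⁻ y, f y ∂p := by
        intro f
        calc (∫⁻ y, f y ∂μ) ≤ (∫⁻ y, f y ∂μ) + ∫⁻ y, f y ∂q := le_self_add
          _ = ∫⁻ y, f y ∂(μ + q) := (lintegral_add_measure f μ q).symm
          _ = ∫⁻ y, f y ∂(ν + p) := by rw [h]
          _ = (∫⁻ y, f y ∂ν) + ∫⁻ y, f y ∂p := lintegral_add_measure f ν p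
      -- bound for the p-integral
      have hptop : ∀ y, O.indicator Fμ y ≤ runCoeff μ n := by
        intro y
        by_cases hy : y ∈ O
        · rw [Set.indicator_of_mem hy]
          exact measure_mono (runSet_subset_strictMono n (some y))
        · rw [Set.indicator_of_notMem hy]
          exact zero_le
      have hpbound : (∫⁻ y, O.indicator Fμ y ∂p) ≤ runCoeff μ n * p Set.univ := by
        calc (∫⁻ y, O.indicator Fμ y ∂p) ≤ ∫⁻ _, runCoeff μ n ∂p :=
              lintegral_mono hptop
          _ = runCoeff μ n * p Set.univ := lintegral_const _
      -- pointwise induction hypothesis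
      set G := fun y => p Set.univ * ∑ k ∈ Finset.range n,
          runCoeff μ (n - 1 - k) *
            (Measure.pi fun _ : Fin k => ν) (runSet k (some y)) with hGdef
      have hpt : ∀ y, O.indicator Fμ y ≤ O.indicator Fν y + O.indicator G y := by
        intro y
        by_cases hy : y ∈ O
        · rw [Set.indicator_of_mem hy, Set.indicator_of_mem hy, Set.indicator_of_mem hy]
          exact ih (some y)
        · simp [Set.indicator_of_notMem hy]
      -- the G-part integral
      have hGsum : ∀ y, O.indicator G y
          = ∑ k ∈ Finset.range n, (p Set.univ * runCoeff μ (n - 1 - k)) *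
              O.indicator (fun y => (Measure.pi fun _ : Fin k => ν) (runSet k (some y))) y := by
        intro y
        by_cases hy : y ∈ O
        · simp only [Set.indicator_of_mem hy, hGdef, Finset.mul_sum]
          exact Finset.sum_congr rfl fun k _ => by ring
        · simp [Set.indicator_of_notMem hy]
      have hGint : (∫⁻ y, O.indicator G y ∂ν)
          = ∑ k ∈ Finset.range n, (p Set.univ * runCoeff μ (n - 1 - k)) *
              (Measure.pi fun _ : Fin (k + 1) => ν) (runSet (k + 1) o) := by
        calc (∫⁻ y, O.indicator G y ∂ν)
            = ∫⁻ y, ∑ k ∈ Finset.range n, (p Set.univ * runCoeff μ (n - 1 - k)) *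
                O.indicator
                  (fun y => (Measure.pi fun _ : Fin k => ν) (runSet k (some y))) y ∂ν := by
              exact lintegral_congr hGsum
          _ = ∑ k ∈ Finset.range n, ∫⁻ y, (p Set.univ * runCoeff μ (n - 1 - k)) *
                O.indicator
                  (fun y => (Measure.pi fun _ : Fin k => ν) (runSet k (some y))) y ∂ν := by
              refine lintegral_finset_sum _ fun k _ => ?_
              exact (((measurable_section hord ν k).indicator hOm).const_mul _)
          _ = ∑ k ∈ Finset.range n, (p Set.univ * runCoeff μ (n - 1 - k)) *
                (Measure.pi fun _ : Fin (k + 1) => ν) (runSet (k + 1) o) := by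
              refine Finset.sum_congr rfl fun k _ => ?_
              rw [lintegral_const_mul _ ((measurable_section hord ν k).indicator hOm)]
              rw [pi_succ_apply hord ν k o]
      -- put everything together
      rw [pi_succ_apply hord μ n o, pi_succ_apply hord ν n o]
      calc (∫⁻ y, O.indicator Fμ y ∂μ)
          ≤ (∫⁻ y, O.indicator Fμ y ∂ν) + ∫⁻ y, O.indicator Fμ y ∂p := hint _
        _ ≤ (∫⁻ y, O.indicator Fν y + O.indicator G y ∂ν) + runCoeff μ n * p Set.univ :=
            add_le_add (lintegral_mono hpt) hpbound
        _ = ((∫⁻ y, O.indicator Fν y ∂ν) + ∫⁻ y, O.indicator G y ∂ν)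
              + runCoeff μ n * p Set.univ := by
            rw [lintegral_add_left (hFνm.indicator hOm)]
        _ = (∫⁻ y, O.indicator Fν y ∂ν)
              + p Set.univ * ∑ k ∈ Finset.range (n + 1),
                  runCoeff μ (n + 1 - 1 - k) *
                    (Measure.pi fun _ : Fin k => ν) (runSet k o) := by
            rw [hGint]
            have h0 : (Measure.pi fun _ : Fin 0 => ν) (runSet 0 o) = 1 := by
              rw [runSet_zero, Measure.pi_univ]
              simp
            have hrw : ∑ k ∈ Finset.range (n + 1), runCoeff μ (n + 1 - 1 - k) *
                  (Measure.pi fun _ : Fin k => ν) (runSet k o)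
                = (∑ k ∈ Finset.range n, runCoeff μ (n - 1 - k) *
                    (Measure.pi fun _ : Fin (k + 1) => ν) (runSet (k + 1) o))
                  + runCoeff μ n * 1 := by
              rw [Finset.sum_range_succ']
              congr 1
              · refine Finset.sum_congr rfl fun k hk => ?_
                congr 2
                omega
              · rw [h0]
                congr 2
            rw [hrw, mul_add, Finset.mul_sum, mul_one, add_assoc]
            congr 1
            congr 1
            · exact Finset.sum_congr rfl fun k _ => by ring
            · exact mul_comm _ _

end Stmt18Aux

open Stmt18Aux in
/-- |Lₙ(μ₁) − Lₙ(μ₂)| ≤ ‖μ₁ − μ₂‖ · Σ_{k=0}^{n−1} Lₖ(μ₁)·L_{n−k−1}(μ₂), where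
‖μ₁ − μ₂‖ is the total variation norm of the signed measure μ₁ − μ₂. -/
theorem stmt18 {T : Type*} [MeasurableSpace T] [PartialOrder T]
    (hord : MeasurableSet {p : T × T | p.1 < p.2})
    (μ₁ μ₂ : Measure T) [IsFiniteMeasure μ₁] [IsFiniteMeasure μ₂]
    (n : ℕ) (hn : 1 ≤ n) :
    |(runCoeff μ₁ n).toReal - (runCoeff μ₂ n).toReal|
      ≤ ((μ₁.toSignedMeasure - μ₂.toSignedMeasure).totalVariation Set.univ).toReal
        * ∑ k ∈ Finset.range n, (runCoeff μ₁ k).toReal * (runCoeff μ₂ (n - k - 1)).toReal := by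
  classical
  set s := μ₁.toSignedMeasure - μ₂.toSignedMeasure with hs
  set p := s.toJordanDecomposition.posPart with hp
  set q := s.toJordanDecomposition.negPart with hq
  have hJ : p.toSignedMeasure - q.toSignedMeasure = s :=
    s.toSignedMeasure_toJordanDecomposition
  have hmeq : μ₁ + q = μ₂ + p := by
    rw [← Measure.toSignedMeasure_eq_toSignedMeasure_iff,
      Measure.toSignedMeasure_add, Measure.toSignedMeasure_add]
    have h2 : μ₁.toSignedMeasure - μ₂.toSignedMeasure
        = p.toSignedMeasure - q.toSignedMeasure := hJ.symm
    have h3 := sub_eq_sub_iff_add_eq_add.mp h2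
    rw [h3, add_comm]
  have hTV : s.totalVariation Set.univ = p Set.univ + q Set.univ := by
    simp only [SignedMeasure.totalVariation, ← hp, ← hq, Measure.add_apply]
  set TVu := s.totalVariation Set.univ with hTVu
  -- finiteness facts
  have hrc_ne_top : ∀ (μ : Measure T) [IsFiniteMeasure μ] (m : ℕ), runCoeff μ m ≠ ⊤ := by
    intro μ _ m
    have hle : runCoeff μ m ≤ (Measure.pi fun _ : Fin m => μ) Set.univ :=
      measure_mono (Set.subset_univ _)
    rw [Measure.pi_univ] at hle
    exact ne_top_of_le_ne_top (ENNReal.prod_lt_top fun _ _ => measure_lt_top μ _).ne hle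
  have hTV_ne_top : TVu ≠ ⊤ := by
    rw [hTV]
    exact ENNReal.add_ne_top.mpr ⟨measure_ne_top _ _, measure_ne_top _ _⟩
  set S₀ : ENNReal := ∑ k ∈ Finset.range n, runCoeff μ₁ k * runCoeff μ₂ (n - 1 - k) with hS₀
  have hS₀_ne_top : S₀ ≠ ⊤ := by
    rw [hS₀]
    refine (ENNReal.sum_lt_top.mpr fun k _ => ?_).ne
    exact ENNReal.mul_lt_top (lt_top_iff_ne_top.mpr (hrc_ne_top μ₁ k))
      (lt_top_iff_ne_top.mpr (hrc_ne_top μ₂ _))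
  -- the two one-sided bounds in ℝ≥0∞
  have h1 := key hord μ₁ μ₂ p q hmeq n none
  have h2 := key hord μ₂ μ₁ q p hmeq.symm n none
  rw [runSet_none] at h1 h2
  have hrun : ∀ (μ : Measure T) (k : ℕ),
      (Measure.pi fun _ : Fin k => μ) (runSet (T := T) k none) = runCoeff μ k := by
    intro μ k
    rw [runSet_none]
    rfl
  simp only [hrun] at h1 h2
  -- h1 : runCoeff μ₁ n ≤ runCoeff μ₂ n + p univ * Σ_k runCoeff μ₁ (n-1-k) * runCoeff μ₂ k
  have hrefl : ∑ k ∈ Finset.range n, runCoeff μ₁ (n - 1 - k) * runCoeff μ₂ k = S₀ := by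
    rw [hS₀]
    calc ∑ k ∈ Finset.range n, runCoeff μ₁ (n - 1 - k) * runCoeff μ₂ k
        = ∑ k ∈ Finset.range n,
            runCoeff μ₁ (n - 1 - k) * runCoeff μ₂ (n - 1 - (n - 1 - k)) := by
          refine Finset.sum_congr rfl fun k hk => ?_
          rw [Finset.mem_range] at hk
          congr 2
          omega
      _ = ∑ k ∈ Finset.range n, runCoeff μ₁ k * runCoeff μ₂ (n - 1 - k) :=
          Finset.sum_range_reflect (fun j => runCoeff μ₁ j * runCoeff μ₂ (n - 1 - j)) n
  have hcomm : ∑ k ∈ Finset.range n, runCoeff μ₂ (n - 1 - k) * runCoeff μ₁ k = S₀ := by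
    rw [hS₀]
    exact Finset.sum_congr rfl fun k _ => mul_comm _ _
  rw [hrefl] at h1
  rw [hcomm] at h2
  have hp_le : p Set.univ ≤ TVu := by rw [hTV]; exact le_self_add
  have hq_le : q Set.univ ≤ TVu := by rw [hTV]; exact le_add_self
  have hA : runCoeff μ₁ n ≤ runCoeff μ₂ n + TVu * S₀ :=
    h1.trans (add_le_add_right (mul_le_mul_left hp_le _) _)
  have hB : runCoeff μ₂ n ≤ runCoeff μ₁ n + TVu * S₀ :=
    h2.trans (add_le_add_right (mul_le_mul_left hq_le _) _)
  -- convert to reals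
  have hC_ne_top : TVu * S₀ ≠ ⊤ := ENNReal.mul_ne_top hTV_ne_top hS₀_ne_top
  have hgoal_eq : TVu.toReal
        * ∑ k ∈ Finset.range n, (runCoeff μ₁ k).toReal * (runCoeff μ₂ (n - k - 1)).toReal
      = (TVu * S₀).toReal := by
    rw [ENNReal.toReal_mul]
    congr 1
    rw [hS₀, ENNReal.toReal_sum fun k _ =>
      ENNReal.mul_ne_top (hrc_ne_top μ₁ k) (hrc_ne_top μ₂ _)]
    refine Finset.sum_congr rfl fun k _ => ?_
    rw [ENNReal.toReal_mul]
    congr 3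
    omega
  rw [hgoal_eq, abs_sub_le_iff]
  constructor
  · rw [sub_le_iff_le_add, ← ENNReal.toReal_add hC_ne_top (hrc_ne_top μ₂ n), add_comm]
    exact ENNReal.toReal_mono
      (ENNReal.add_ne_top.mpr ⟨hrc_ne_top μ₂ n, hC_ne_top⟩) hA
  · rw [sub_le_iff_le_add, ← ENNReal.toReal_add hC_ne_top (hrc_ne_top μ₁ n), add_comm]
    exact ENNReal.toReal_mono
      (ENNReal.add_ne_top.mpr ⟨hrc_ne_top μ₁ n, hC_ne_top⟩) hB
end
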